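/- arXiv:2009.04128 — 5 statements merged into one kernel-verified Lean document; each statement's English description precedes it below -/
import Mathlib

section
/- Let p ≥ 1. There is a constant C > 0 depending only on p such that the following holds. Let Ω ⊂ ℝ^d be a Borel set, (Ω_i)_{i∈ℕ} a Borel partition of Ω, and μ, λ finite positive measures on Ω with λ(Ω) > 0 and λ(Ω_i) > 0 for all i with μ(Ω_i) > 0. Then for every ε ∈ (0,1), W_p^p(μ, (μ(Ω)/λ(Ω)) λ) ≤ (1+ε) ∑_i W_p^p(μ restricted to Ω_i, (μ(Ω_i)/λ(Ω_i)) λ restricted to Ω_i) + (C/ε^{p-1}) W_p^p(∑_i (μ(Ω_i)/λ(Ω_i)) χ_{Ω_i} λ, (μ(Ω)/λ(Ω)) λ). -/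
open MeasureTheory ENNReal

/-- Transportation cost of order `p` (see the paper): infimum over couplings. -/
noncomputable def Wcost {X : Type*} [MeasurableSpace X] [PseudoMetricSpace X]
    (p : ℝ) (μ ν : Measure X) : ℝ≥0∞ :=
  sInf { c | ∃ π : Measure (X × X), π.map Prod.fst = μ ∧ π.map Prod.snd = ν ∧
      c = ∫⁻ z, ENNReal.ofReal (dist z.1 z.2 ^ p) ∂π }

section Aux

open ProbabilityTheory

private lemma nat_chord (n : ℕ) {u : ℝ} (hu : 0 ≤ u) (hu1 : u ≤ 1) :
    (1+u)^n ≤ 1 + ((2:ℝ)^n - 1)*u := by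
  induction n with
  | zero => simp
  | succ n ih =>
    have h1 : (1:ℝ) ≤ 2^n := by
      calc (1:ℝ) = 1^n := (one_pow n).symm
      _ ≤ 2^n := pow_le_pow_left₀ (by norm_num) (by norm_num) n
    have h0 : (0:ℝ) ≤ (1+u)^n := by positivity
    calc (1+u)^(n+1) = (1+u)^n * (1+u) := by ring
    _ ≤ (1 + ((2:ℝ)^n - 1)*u) * (1+u) := by
        apply mul_le_mul_of_nonneg_right ih (by linarith)
    _ ≤ 1 + ((2:ℝ)^(n+1) - 1)*u := by
        nlinarith [pow_succ (2:ℝ) n,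
          mul_nonneg (mul_nonneg (sub_nonneg.mpr h1) hu) (sub_nonneg.mpr hu1)]

private lemma core_ineq (p : ℝ) (hp : 1 ≤ p) {ε a b : ℝ} (hε : 0 < ε) (hε1 : ε < 1)
    (ha : 0 ≤ a) (hb : 0 ≤ b) :
    (a+b)^p ≤ (1+ε)*a^p + ((4:ℝ)^(p*(p-1))/ε^(p-1))*b^p := by
  have h4p : (0:ℝ) < (4:ℝ)^p := Real.rpow_pos_of_pos (by norm_num) p
  have h4p4 : (4:ℝ) ≤ (4:ℝ)^p := by
    calc (4:ℝ) = (4:ℝ)^(1:ℝ) := (Real.rpow_one 4).symm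
    _ ≤ (4:ℝ)^p := Real.rpow_le_rpow_of_exponent_le (by norm_num) hp
  set w2 : ℝ := ε/(4:ℝ)^p with hw2def
  have hw2 : 0 < w2 := div_pos hε h4p
  have hw2' : w2 ≤ 1/2 := by
    rw [hw2def, div_le_iff₀ h4p]; nlinarith
  set w1 : ℝ := 1 - w2 with hw1def
  have hw1 : 0 < w1 := by simp only [hw1def]; linarith
  have hw1' : w1 ≤ 1 := by simp only [hw1def]; linarith
  have key : ∀ w : ℝ, 0 ≤ w → w^(1-p) = (w⁻¹)^(p-1) := by
    intro w hw
    rw [← Real.rpow_neg_one w, ← Real.rpow_mul hw]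
    congr 1; ring
  have hmean : (a+b)^p ≤ w1 * (a/w1)^p + w2 * (b/w2)^p := by
    have h := Real.rpow_arith_mean_le_arith_mean_rpow (Finset.univ : Finset (Fin 2))
      ![w1, w2] ![a/w1, b/w2]
      (by intro i _; fin_cases i <;> simp [hw1.le, hw2.le])
      (by rw [Fin.sum_univ_two]; simp only [Matrix.cons_val_zero, Matrix.cons_val_one,
            Matrix.head_cons, hw1def]; ring)
      (by intro i _; fin_cases i <;>
          simp [div_nonneg, ha, hb, hw1.le, hw2.le]) hp
    simp only [Fin.sum_univ_two, Matrix.cons_val_zero, Matrix.cons_val_one,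
      Matrix.head_cons] at h
    rw [show w1 * (a/w1) = a by field_simp, show w2 * (b/w2) = b by field_simp] at h
    exact h
  have hterm : ∀ w x : ℝ, 0 < w → 0 ≤ x → w * (x/w)^p = w^(1-p) * x^p := by
    intro w x hw hx
    rw [Real.div_rpow hx hw.le, Real.rpow_sub hw, Real.rpow_one]
    field_simp
  rw [hterm w1 a hw1 ha, hterm w2 b hw2 hb] at hmean
  have hB1 : w1^(1-p) ≤ 1+ε := by
    have hu : w1⁻¹ ≤ 1 + 2*w2 := by
      rw [← one_div, div_le_iff₀ hw1]
      nlinarith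
    set n := ⌈p-1⌉₊ with hndef
    have hn : p - 1 ≤ (n:ℝ) := Nat.le_ceil _
    have hnp : (n:ℝ) ≤ p := by
      have := Nat.ceil_lt_add_one (show (0:ℝ) ≤ p-1 by linarith)
      rw [← hndef] at this; linarith
    have h2 : (w1⁻¹)^(p-1) ≤ (1+2*w2)^(p-1) :=
      Real.rpow_le_rpow (inv_nonneg.mpr hw1.le) hu (by linarith)
    have h3 : (1+2*w2)^(p-1) ≤ (1+2*w2)^(n:ℝ) :=
      Real.rpow_le_rpow_of_exponent_le (by linarith) hn
    have h4 : (1+2*w2)^(n:ℝ) = (1+2*w2)^n := Real.rpow_natCast _ n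
    have h5 : (1+2*w2)^n ≤ 1 + ((2:ℝ)^n - 1)*(2*w2) :=
      nat_chord n (by linarith) (by linarith)
    have h6 : ((2:ℝ)^n - 1)*(2*w2) ≤ ε := by
      have h2ppos : (0:ℝ) < 2^p := Real.rpow_pos_of_pos (by norm_num) p
      have h2n : (2:ℝ)^n ≤ (2:ℝ)^p := by
        rw [← Real.rpow_natCast 2 n]
        exact Real.rpow_le_rpow_of_exponent_le one_le_two hnp
      have h2p2 : (2:ℝ) ≤ (2:ℝ)^p := by
        calc (2:ℝ) = 2^(1:ℝ) := (Real.rpow_one 2).symm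
        _ ≤ _ := Real.rpow_le_rpow_of_exponent_le one_le_two hp
      have h44 : (4:ℝ)^p = 2^p * 2^p := by
        rw [← Real.mul_rpow (by norm_num) (by norm_num)]; norm_num
      have hc : ((2:ℝ)^n - 1)*2 ≤ 2^p * 2^p := by nlinarith
      rw [hw2def, show ((2:ℝ)^n - 1)*(2*(ε/(4:ℝ)^p)) = (((2:ℝ)^n - 1)*2*ε)/(4:ℝ)^p by ring,
        div_le_iff₀ h4p, h44]
      nlinarith
    calc w1^(1-p) = (w1⁻¹)^(p-1) := key w1 hw1.le
    _ ≤ (1+2*w2)^(p-1) := h2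
    _ ≤ (1+2*w2)^(n:ℝ) := h3
    _ = (1+2*w2)^n := h4
    _ ≤ 1 + ((2:ℝ)^n - 1)*(2*w2) := h5
    _ ≤ 1 + ε := by linarith
  have hB2 : w2^(1-p) = (4:ℝ)^(p*(p-1))/ε^(p-1) := by
    have hinv : w2⁻¹ = (4:ℝ)^p/ε := by rw [hw2def, inv_div]
    rw [key w2 hw2.le, hinv, Real.div_rpow h4p.le hε.le,
      ← Real.rpow_mul (by norm_num : (0:ℝ) ≤ 4)]
  calc (a+b)^p ≤ w1^(1-p) * a^p + w2^(1-p) * b^p := hmean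
  _ ≤ (1+ε)*a^p + ((4:ℝ)^(p*(p-1))/ε^(p-1))*b^p := by
      rw [hB2]
      exact add_le_add_left (mul_le_mul_of_nonneg_right hB1 (Real.rpow_nonneg ha p)) _

section Wc
variable {X : Type*} [MeasurableSpace X] [PseudoMetricSpace X]

private lemma Wcost_def (p : ℝ) (μ ν : Measure X) : Wcost p μ ν =
    sInf { c | ∃ π : Measure (X × X), π.map Prod.fst = μ ∧ π.map Prod.snd = ν ∧
      c = ∫⁻ z, ENNReal.ofReal (dist z.1 z.2 ^ p) ∂π } := rfl

private lemma Wcost_le_lintegral (p : ℝ) {μ ν : Measure X} (π : Measure (X × X))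
    (h1 : π.map Prod.fst = μ) (h2 : π.map Prod.snd = ν) :
    Wcost p μ ν ≤ ∫⁻ z, ENNReal.ofReal (dist z.1 z.2 ^ p) ∂π :=
  sInf_le ⟨π, h1, h2, rfl⟩

private lemma exists_coupling_lt (p : ℝ) {μ ν : Measure X} (h : Wcost p μ ν ≠ ∞)
    {δ : ℝ≥0∞} (hδ : δ ≠ 0) :
    ∃ π : Measure (X × X), π.map Prod.fst = μ ∧ π.map Prod.snd = ν ∧
      ∫⁻ z, ENNReal.ofReal (dist z.1 z.2 ^ p) ∂π < Wcost p μ ν + δ := by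
  have hlt : Wcost p μ ν < Wcost p μ ν + δ := ENNReal.lt_add_right h hδ
  rw [Wcost_def, sInf_lt_iff] at hlt
  obtain ⟨c, ⟨π, h1, h2, rfl⟩, hclt⟩ := hlt
  exact ⟨π, h1, h2, hclt⟩

private lemma Wcost_sum_le (p : ℝ) (μi νi : ℕ → Measure X) :
    Wcost p (Measure.sum μi) (Measure.sum νi) ≤ ∑' i, Wcost p (μi i) (νi i) := by
  by_cases htop : ∑' i, Wcost p (μi i) (νi i) = ∞
  · rw [htop]; exact le_top
  refine ENNReal.le_of_forall_pos_le_add fun δ hδ _ => ?_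
  obtain ⟨f, hf, hfsum⟩ := ENNReal.exists_pos_sum_of_countable
    (show ((δ:ℝ≥0∞)) ≠ 0 by exact_mod_cast hδ.ne') ℕ
  have hchoice : ∀ i, ∃ π : Measure (X × X), π.map Prod.fst = μi i ∧
      π.map Prod.snd = νi i ∧
      ∫⁻ z, ENNReal.ofReal (dist z.1 z.2 ^ p) ∂π < Wcost p (μi i) (νi i) + f i :=
    fun i => exists_coupling_lt p (ne_top_of_le_ne_top htop (ENNReal.le_tsum i))
      (by exact_mod_cast (hf i).ne')
  choose π h1 h2 hc using hchoice
  have hm1 : (Measure.sum π).map Prod.fst = Measure.sum μi := by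
    rw [Measure.map_sum measurable_fst.aemeasurable]
    congr 1; funext i; exact h1 i
  have hm2 : (Measure.sum π).map Prod.snd = Measure.sum νi := by
    rw [Measure.map_sum measurable_snd.aemeasurable]
    congr 1; funext i; exact h2 i
  calc Wcost p (Measure.sum μi) (Measure.sum νi)
      ≤ ∫⁻ z, ENNReal.ofReal (dist z.1 z.2 ^ p) ∂(Measure.sum π) :=
        Wcost_le_lintegral p _ hm1 hm2
  _ = ∑' i, ∫⁻ z, ENNReal.ofReal (dist z.1 z.2 ^ p) ∂(π i) := lintegral_sum_measure _ _
  _ ≤ ∑' i, (Wcost p (μi i) (νi i) + f i) := ENNReal.tsum_le_tsum fun i => (hc i).le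
  _ = (∑' i, Wcost p (μi i) (νi i)) + ∑' i, (f i : ℝ≥0∞) := ENNReal.tsum_add
  _ ≤ (∑' i, Wcost p (μi i) (νi i)) + δ := add_le_add_right hfsum.le _

end Wc

private lemma isFiniteMeasure_of_map_fst {X Y : Type*} [MeasurableSpace X] [MeasurableSpace Y]
    {π : Measure (X × Y)} {μ : Measure X} (h : π.map Prod.fst = μ) (hμ : μ Set.univ ≠ ∞) :
    IsFiniteMeasure π := by
  refine ⟨?_⟩
  have h2 : π.map Prod.fst Set.univ = π Set.univ := by
    rw [Measure.map_apply measurable_fst MeasurableSet.univ, Set.preimage_univ]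
  rw [← h2, h]
  exact hμ.lt_top

private lemma glue_couplings {X : Type*} [MeasurableSpace X] [StandardBorelSpace X] [Nonempty X]
    (π1 π2 : Measure (X × X)) [IsFiniteMeasure π1] [IsFiniteMeasure π2]
    (h : π1.map Prod.snd = π2.map Prod.fst) :
    ∃ τ : Measure (X × (X × X)),
      τ.map (fun w => (w.1, w.2.1)) = π1.map Prod.swap ∧
      τ.map (fun w => (w.1, w.2.2)) = π2 := by
  set ρ : Measure (X × X) := π1.map Prod.swap with hρ
  haveI : IsFiniteMeasure ρ := ⟨by
    rw [hρ, Measure.map_apply measurable_swap MeasurableSet.univ, Set.preimage_univ]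
    exact measure_lt_top π1 _⟩
  have hfst : ρ.fst = π2.fst := by
    rw [Measure.fst, hρ, Measure.map_map measurable_fst measurable_swap]
    have h' : (Prod.fst ∘ Prod.swap : X × X → X) = Prod.snd := rfl
    rw [h', h, Measure.fst]
  set κ := ρ.condKernel with hκ
  set η := π2.condKernel with hη
  set ν := π2.fst with hν
  have hmf1 : Measurable fun w : X × X × X => (w.1, w.2.1) :=
    measurable_fst.prodMk (measurable_fst.comp measurable_snd)
  have hmf2 : Measurable fun w : X × X × X => (w.1, w.2.2) :=
    measurable_fst.prodMk (measurable_snd.comp measurable_snd)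
  refine ⟨ν ⊗ₘ (κ ×ₖ η), ?_, ?_⟩
  · have h1 : (ν ⊗ₘ (κ ×ₖ η)).map (fun w => (w.1, w.2.1)) = ν ⊗ₘ κ := by
      ext s hs
      rw [Measure.map_apply hmf1 hs, Measure.compProd_apply (hmf1 hs),
        Measure.compProd_apply hs]
      refine lintegral_congr fun y => ?_
      have hset : (Prod.mk y ⁻¹' ((fun w : X × (X × X) => (w.1, w.2.1)) ⁻¹' s))
          = (Prod.mk y ⁻¹' s) ×ˢ Set.univ := by
        ext v; simp [Set.mem_preimage]
      rw [hset, Kernel.prod_apply, Measure.prod_prod, measure_univ, mul_one]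
    rw [h1, ← hfst]
    exact Measure.disintegrate ρ ρ.condKernel
  · have h2 : (ν ⊗ₘ (κ ×ₖ η)).map (fun w => (w.1, w.2.2)) = ν ⊗ₘ η := by
      ext s hs
      rw [Measure.map_apply hmf2 hs, Measure.compProd_apply (hmf2 hs),
        Measure.compProd_apply hs]
      refine lintegral_congr fun y => ?_
      have hset : (Prod.mk y ⁻¹' ((fun w : X × (X × X) => (w.1, w.2.2)) ⁻¹' s))
          = Set.univ ×ˢ (Prod.mk y ⁻¹' s) := by
        ext v; simp [Set.mem_preimage]
      rw [hset, Kernel.prod_apply, Measure.prod_prod, measure_univ, one_mul]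
    rw [h2, hν]
    exact Measure.disintegrate π2 π2.condKernel

section Tri
variable {X : Type*} [MeasurableSpace X] [PseudoMetricSpace X] [OpensMeasurableSpace X]
  [SecondCountableTopology X] [StandardBorelSpace X] [Nonempty X]

private lemma Wcost_triangle (p : ℝ) (hp : 1 ≤ p) {ε : ℝ} (hε : 0 < ε) (hε1 : ε < 1)
    (μ ν ρt : Measure X) [IsFiniteMeasure μ] (hν : ν Set.univ ≠ ∞) :
    Wcost p μ ρt ≤ ENNReal.ofReal (1+ε) * Wcost p μ ν
      + ENNReal.ofReal ((4:ℝ)^(p*(p-1))/ε^(p-1)) * Wcost p ν ρt := by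
  have hp0 : 0 ≤ p := le_trans zero_le_one hp
  have hC : 0 < (4:ℝ)^(p*(p-1))/ε^(p-1) :=
    div_pos (Real.rpow_pos_of_pos (by norm_num) _) (Real.rpow_pos_of_pos hε _)
  set c1 : ℝ≥0∞ := ENNReal.ofReal (1+ε) with hc1def
  set c2 : ℝ≥0∞ := ENNReal.ofReal ((4:ℝ)^(p*(p-1))/ε^(p-1)) with hc2def
  have hc1 : c1 ≠ 0 := (ENNReal.ofReal_pos.mpr (by linarith)).ne'
  have hc2 : c2 ≠ 0 := (ENNReal.ofReal_pos.mpr hC).ne'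
  by_cases h1 : Wcost p μ ν = ∞
  · rw [h1, ENNReal.mul_top hc1]; exact le_top.trans (le_add_right le_rfl)
  by_cases h2 : Wcost p ν ρt = ∞
  · rw [h2, ENNReal.mul_top hc2]; exact le_top.trans (le_add_left le_rfl)
  refine ENNReal.le_of_forall_pos_le_add fun δ hδ _ => ?_
  set η0 : ℝ≥0∞ := (δ:ℝ≥0∞) / (2*(c1+c2)) with hη0
  have h2c : (2*(c1+c2)) ≠ ∞ :=
    ENNReal.mul_ne_top (by norm_num) (ENNReal.add_ne_top.mpr ⟨ofReal_ne_top, ofReal_ne_top⟩)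
  have hη0ne : η0 ≠ 0 := by
    rw [hη0, ENNReal.div_ne_zero]
    exact ⟨by exact_mod_cast hδ.ne', h2c⟩
  obtain ⟨π1, hπ1f, hπ1s, hπ1c⟩ := exists_coupling_lt p h1 hη0ne
  obtain ⟨π2, hπ2f, hπ2s, hπ2c⟩ := exists_coupling_lt p h2 hη0ne
  haveI : IsFiniteMeasure π1 := isFiniteMeasure_of_map_fst hπ1f (measure_ne_top μ _)
  haveI : IsFiniteMeasure π2 := isFiniteMeasure_of_map_fst hπ2f hν
  obtain ⟨τ, hτ1, hτ2⟩ := glue_couplings π1 π2 (by rw [hπ1s, hπ2f])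
  have hcostm : Measurable fun z : X × X => ENNReal.ofReal (dist z.1 z.2 ^ p) :=
    ENNReal.measurable_ofReal.comp
      ((Real.continuous_rpow_const hp0).measurable.comp measurable_dist)
  have hg1 : Measurable fun z : X × X => ENNReal.ofReal (dist z.2 z.1 ^ p) :=
    hcostm.comp measurable_swap
  have hmf1 : Measurable fun w : X × X × X => (w.1, w.2.1) :=
    measurable_fst.prodMk (measurable_fst.comp measurable_snd)
  have hmf2 : Measurable fun w : X × X × X => (w.1, w.2.2) :=
    measurable_fst.prodMk (measurable_snd.comp measurable_snd)
  have hmi1 : Measurable fun w : X × X × X => ENNReal.ofReal (dist w.2.1 w.1 ^ p) :=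
    hg1.comp hmf1
  have hmi2 : Measurable fun w : X × X × X => ENNReal.ofReal (dist w.1 w.2.2 ^ p) :=
    hcostm.comp hmf2
  have hm1 : (τ.map Prod.snd).map Prod.fst = μ := by
    rw [Measure.map_map measurable_fst measurable_snd]
    have e1 : (Prod.fst ∘ Prod.snd : X × (X × X) → X)
        = (Prod.snd ∘ fun w : X × (X × X) => (w.1, w.2.1)) := rfl
    rw [e1, ← Measure.map_map measurable_snd hmf1, hτ1,
      Measure.map_map measurable_snd measurable_swap]
    have e2 : (Prod.snd ∘ Prod.swap : X × X → X) = Prod.fst := rfl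
    rw [e2, hπ1f]
  have hm2 : (τ.map Prod.snd).map Prod.snd = ρt := by
    rw [Measure.map_map measurable_snd measurable_snd]
    have e1 : (Prod.snd ∘ Prod.snd : X × (X × X) → X)
        = (Prod.snd ∘ fun w : X × (X × X) => (w.1, w.2.2)) := rfl
    rw [e1, ← Measure.map_map measurable_snd hmf2, hτ2, hπ2s]
  have key : ∀ w : X × (X × X), ENNReal.ofReal (dist w.2.1 w.2.2 ^ p)
      ≤ c1 * ENNReal.ofReal (dist w.2.1 w.1 ^ p) + c2 * ENNReal.ofReal (dist w.1 w.2.2 ^ p) := by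
    intro w
    have htri : dist w.2.1 w.2.2 ≤ dist w.2.1 w.1 + dist w.1 w.2.2 := dist_triangle _ _ _
    have h0 : dist w.2.1 w.2.2 ^ p ≤ (dist w.2.1 w.1 + dist w.1 w.2.2)^p :=
      Real.rpow_le_rpow dist_nonneg htri hp0
    have hcore := core_ineq p hp hε hε1 (dist_nonneg (x := w.2.1) (y := w.1))
      (dist_nonneg (x := w.1) (y := w.2.2))
    calc ENNReal.ofReal (dist w.2.1 w.2.2 ^ p)
        ≤ ENNReal.ofReal ((1+ε)*(dist w.2.1 w.1)^p
            + ((4:ℝ)^(p*(p-1))/ε^(p-1))*(dist w.1 w.2.2)^p) :=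
          ENNReal.ofReal_le_ofReal (h0.trans hcore)
    _ = c1 * ENNReal.ofReal (dist w.2.1 w.1 ^ p) + c2 * ENNReal.ofReal (dist w.1 w.2.2 ^ p) := by
        rw [ENNReal.ofReal_add (mul_nonneg (by linarith) (Real.rpow_nonneg dist_nonneg _))
            (mul_nonneg hC.le (Real.rpow_nonneg dist_nonneg _)),
          ENNReal.ofReal_mul (by linarith), ENNReal.ofReal_mul hC.le]
  have i1 : ∫⁻ w, ENNReal.ofReal (dist w.2.1 w.1 ^ p) ∂τ
      = ∫⁻ z, ENNReal.ofReal (dist z.1 z.2 ^ p) ∂π1 := by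
    calc ∫⁻ w, ENNReal.ofReal (dist w.2.1 w.1 ^ p) ∂τ
        = ∫⁻ z, ENNReal.ofReal (dist z.2 z.1 ^ p) ∂(τ.map fun w : X × (X × X) => (w.1, w.2.1)) :=
          (lintegral_map hg1 hmf1).symm
    _ = ∫⁻ z, ENNReal.ofReal (dist z.2 z.1 ^ p) ∂(π1.map Prod.swap) := by rw [hτ1]
    _ = ∫⁻ z, ENNReal.ofReal (dist z.1 z.2 ^ p) ∂π1 := by
        rw [lintegral_map hg1 measurable_swap]; simp
  have i2 : ∫⁻ w, ENNReal.ofReal (dist w.1 w.2.2 ^ p) ∂τ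
      = ∫⁻ z, ENNReal.ofReal (dist z.1 z.2 ^ p) ∂π2 := by
    rw [← hτ2, lintegral_map hcostm hmf2]
  have hfin : (c1+c2) * η0 ≤ δ := by
    rw [hη0]
    calc (c1+c2) * ((δ:ℝ≥0∞) / (2*(c1+c2)))
        = (c1+c2) * (δ:ℝ≥0∞) / ((c1+c2)*2) := by rw [mul_div_assoc, mul_comm 2 (c1+c2)]
    _ = (δ:ℝ≥0∞) / 2 := ENNReal.mul_div_mul_left _ _
        (by intro h0; exact hc1 (by simpa using (add_eq_zero.mp h0).1))
        (ENNReal.add_ne_top.mpr ⟨ofReal_ne_top, ofReal_ne_top⟩)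
    _ ≤ (δ:ℝ≥0∞) := ENNReal.half_le_self
  calc Wcost p μ ρt
      ≤ ∫⁻ z, ENNReal.ofReal (dist z.1 z.2 ^ p) ∂(τ.map Prod.snd) :=
        Wcost_le_lintegral p _ hm1 hm2
  _ = ∫⁻ w, ENNReal.ofReal (dist w.2.1 w.2.2 ^ p) ∂τ := lintegral_map hcostm measurable_snd
  _ ≤ ∫⁻ w, (c1 * ENNReal.ofReal (dist w.2.1 w.1 ^ p)
        + c2 * ENNReal.ofReal (dist w.1 w.2.2 ^ p)) ∂τ := lintegral_mono key
  _ = c1 * ∫⁻ w, ENNReal.ofReal (dist w.2.1 w.1 ^ p) ∂τ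
        + c2 * ∫⁻ w, ENNReal.ofReal (dist w.1 w.2.2 ^ p) ∂τ := by
      rw [lintegral_add_left (hmi1.const_mul c1),
        lintegral_const_mul c1 hmi1, lintegral_const_mul c2 hmi2]
  _ ≤ c1 * (Wcost p μ ν + η0) + c2 * (Wcost p ν ρt + η0) := by
      rw [i1, i2]
      exact add_le_add (mul_le_mul_right hπ1c.le c1) (mul_le_mul_right hπ2c.le c2)
  _ = (c1 * Wcost p μ ν + c2 * Wcost p ν ρt) + (c1+c2) * η0 := by ring
  _ ≤ (c1 * Wcost p μ ν + c2 * Wcost p ν ρt) + δ := add_le_add_right hfin _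

end Tri

end Aux

/-- The main sub-additivity lemma (Lemma 3.1): for every `p ≥ 1` there is a
constant `C > 0` depending only on `p` such that for every Borel set `Ω ⊆ ℝ^d`,
every Borel partition `(Ω i)` of `Ω`, every finite measures `μ, λ` on `Ω` with
finite `p`-th moments, and every `ε ∈ (0,1)`,
`W_p^p(μ, (μΩ/λΩ)λ) ≤ (1+ε) ∑ᵢ W_p^p(μ|_{Ωᵢ}, (μΩᵢ/λΩᵢ)λ|_{Ωᵢ})
  + (C/ε^(p-1)) W_p^p(∑ᵢ (μΩᵢ/λΩᵢ)χ_{Ωᵢ}λ, (μΩ/λΩ)λ)`. -/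
theorem main_subadditivity_lemma (p : ℝ) (hp : 1 ≤ p) :
    ∃ C : ℝ, 0 < C ∧ ∀ (d : ℕ) (Ω : Set (EuclideanSpace ℝ (Fin d)))
      (Ωi : ℕ → Set (EuclideanSpace ℝ (Fin d)))
      (μ lam : Measure (EuclideanSpace ℝ (Fin d))),
      MeasurableSet Ω → (∀ i, MeasurableSet (Ωi i)) →
      Pairwise (Function.onFun Disjoint Ωi) → (⋃ i, Ωi i) = Ω →
      IsFiniteMeasure μ → IsFiniteMeasure lam →
      μ Ωᶜ = 0 → lam Ωᶜ = 0 → 0 < lam Ω →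
      (∀ i, 0 < μ (Ωi i) → 0 < lam (Ωi i)) →
      (∫⁻ x, ENNReal.ofReal (‖x‖ ^ p) ∂μ ≠ ∞) →
      (∫⁻ x, ENNReal.ofReal (‖x‖ ^ p) ∂lam ≠ ∞) →
      ∀ ε : ℝ, 0 < ε → ε < 1 →
      Wcost p μ ((μ Ω / lam Ω) • lam)
        ≤ ENNReal.ofReal (1 + ε) *
            (∑' i, Wcost p (μ.restrict (Ωi i))
              ((μ (Ωi i) / lam (Ωi i)) • lam.restrict (Ωi i)))
          + ENNReal.ofReal (C / ε ^ (p - 1)) *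
            Wcost p (Measure.sum fun i => (μ (Ωi i) / lam (Ωi i)) • lam.restrict (Ωi i))
              ((μ Ω / lam Ω) • lam) := by
  refine ⟨(4:ℝ)^(p*(p-1)), Real.rpow_pos_of_pos (by norm_num) _, ?_⟩
  intro d Ω Ωi μ lam hΩ hΩi hdisj hUnion hμfin hlamfin hμc hlamc hlamΩ hpos hmom1 hmom2 ε hε hε1
  haveI := hμfin
  haveI := hlamfin
  set ν : Measure (EuclideanSpace ℝ (Fin d)) :=
    Measure.sum fun i => (μ (Ωi i) / lam (Ωi i)) • lam.restrict (Ωi i) with hνdef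
  -- ν has finite total mass equal to μ Ω
  have hν_univ : ν Set.univ = μ Ω := by
    rw [hνdef, Measure.sum_apply _ MeasurableSet.univ]
    have hterm : ∀ i, ((μ (Ωi i) / lam (Ωi i)) • lam.restrict (Ωi i)) Set.univ = μ (Ωi i) := by
      intro i
      rw [Measure.smul_apply, smul_eq_mul, Measure.restrict_apply_univ]
      by_cases hi : lam (Ωi i) = 0
      · have hμi : μ (Ωi i) = 0 := by
          by_contra hne
          have := hpos i (pos_iff_ne_zero.mpr hne)
          rw [hi] at this
          exact lt_irrefl 0 this
        simp [hi, hμi]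
      · exact ENNReal.div_mul_cancel hi (measure_ne_top lam _)
    calc ∑' i, ((μ (Ωi i) / lam (Ωi i)) • lam.restrict (Ωi i)) Set.univ
        = ∑' i, μ (Ωi i) := by exact tsum_congr hterm
    _ = μ (⋃ i, Ωi i) := (measure_iUnion hdisj hΩi).symm
    _ = μ Ω := by rw [hUnion]
  -- μ decomposes as the sum of its restrictions
  have hμ_sum : (Measure.sum fun i => μ.restrict (Ωi i)) = μ := by
    rw [← Measure.restrict_iUnion hdisj hΩi, hUnion]
    exact Measure.restrict_eq_self_of_ae_mem (mem_ae_iff.mpr (by simpa using hμc))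
  -- subadditivity over the pieces
  have hsum_le : Wcost p μ ν ≤ ∑' i, Wcost p (μ.restrict (Ωi i))
      ((μ (Ωi i) / lam (Ωi i)) • lam.restrict (Ωi i)) := by
    have h := Wcost_sum_le p (fun i => μ.restrict (Ωi i))
      (fun i => (μ (Ωi i) / lam (Ωi i)) • lam.restrict (Ωi i))
    rwa [hμ_sum] at h
  -- approximate triangle inequality
  have htri := Wcost_triangle p hp hε hε1 μ ν ((μ Ω / lam Ω) • lam)
    (by rw [hν_univ]; exact measure_ne_top μ Ω)
  calc Wcost p μ ((μ Ω / lam Ω) • lam)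
      ≤ ENNReal.ofReal (1+ε) * Wcost p μ ν
        + ENNReal.ofReal ((4:ℝ)^(p*(p-1))/ε^(p-1)) * Wcost p ν ((μ Ω / lam Ω) • lam) := htri
  _ ≤ ENNReal.ofReal (1+ε) * (∑' i, Wcost p (μ.restrict (Ωi i))
        ((μ (Ωi i) / lam (Ωi i)) • lam.restrict (Ωi i)))
        + ENNReal.ofReal ((4:ℝ)^(p*(p-1))/ε^(p-1)) * Wcost p ν ((μ Ω / lam Ω) • lam) :=
      add_le_add_left (mul_le_mul_right hsum_le _) _
end

section
/- Let p ≥ 1 and let X_1, X_2, … be i.i.d. uniform random variables on [0,1]^d. Define f(n) = E[ W_p^p( (1/n) ∑_{i=1}^n δ_{X_i}, Leb ) ], the expected transportation cost between the empirical measure and the Lebesgue (uniform) measure on [0,1]^d. Then f is nonincreasing in n: for all 1 ≤ m ≤ n, f(n) ≤ f(m). -/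
open MeasureTheory ENNReal ProbabilityTheory

/-- The unit cube `[0,1]^d` in `ℝ^d`. -/
def unitCube (d : ℕ) : Set (EuclideanSpace ℝ (Fin d)) := {x | ∀ j, 0 ≤ x j ∧ x j ≤ 1}

namespace WcostAux

/-! ### Infimum helpers in `ℝ≥0∞` -/

lemma le_sInf_add_sInf {A B : Set ℝ≥0∞} {c : ℝ≥0∞} (h : ∀ a ∈ A, ∀ b ∈ B, c ≤ a + b) :
    c ≤ sInf A + sInf B := by
  rw [← tsub_le_iff_left]
  refine le_sInf fun b hb => ?_
  rw [tsub_le_iff_left, add_comm, ← tsub_le_iff_left]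
  refine le_sInf fun a ha => ?_
  rw [tsub_le_iff_left, add_comm]
  exact h a ha b hb

lemma le_mul_sInf {A : Set ℝ≥0∞} {x c : ℝ≥0∞} (hc0 : c ≠ 0) (hct : c ≠ ∞)
    (h : ∀ a ∈ A, x ≤ c * a) : x ≤ c * sInf A := by
  rw [mul_comm, ← ENNReal.div_le_iff_le_mul (Or.inl hc0) (Or.inl hct)]
  refine le_sInf fun a ha => ?_
  rw [ENNReal.div_le_iff_le_mul (Or.inl hc0) (Or.inl hct), mul_comm]
  exact h a ha

lemma le_mul_sInf_add {A : Set ℝ≥0∞} {x a b : ℝ≥0∞} (ha0 : a ≠ 0) (hat : a ≠ ∞)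
    (h : ∀ c ∈ A, x ≤ a * c + b) : x ≤ a * sInf A + b := by
  rw [← tsub_le_iff_right]
  exact le_mul_sInf ha0 hat fun c hc => tsub_le_iff_right.2 (h c hc)

/-! ### Convexity-type properties of `Wcost` -/

section conv
variable {X : Type*} [MeasurableSpace X] [PseudoMetricSpace X] {p : ℝ}

lemma Wcost_le {μ ν : Measure X} (π : Measure (X × X)) (h1 : π.map Prod.fst = μ)
    (h2 : π.map Prod.snd = ν) :
    Wcost p μ ν ≤ ∫⁻ z, ENNReal.ofReal (dist z.1 z.2 ^ p) ∂π :=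
  sInf_le ⟨π, h1, h2, rfl⟩

lemma Wcost_add_le (μ₁ μ₂ ν₁ ν₂ : Measure X) :
    Wcost p (μ₁ + μ₂) (ν₁ + ν₂) ≤ Wcost p μ₁ ν₁ + Wcost p μ₂ ν₂ := by
  refine le_sInf_add_sInf fun a ha b hb => ?_
  obtain ⟨π₁, h11, h12, rfl⟩ := ha
  obtain ⟨π₂, h21, h22, rfl⟩ := hb
  refine (Wcost_le (π₁ + π₂) ?_ ?_).trans ?_
  · rw [Measure.map_add _ _ measurable_fst, h11, h21]
  · rw [Measure.map_add _ _ measurable_snd, h12, h22]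
  · rw [lintegral_add_measure]

lemma Wcost_smul_le (c : ℝ≥0∞) (hc0 : c ≠ 0) (hct : c ≠ ∞) (μ ν : Measure X) :
    Wcost p (c • μ) (c • ν) ≤ c * Wcost p μ ν := by
  refine le_mul_sInf hc0 hct fun a ha => ?_
  obtain ⟨π, h1, h2, rfl⟩ := ha
  refine (Wcost_le (c • π) ?_ ?_).trans ?_
  · rw [Measure.map_smul, h1]
  · rw [Measure.map_smul, h2]
  · rw [lintegral_smul_measure, smul_eq_mul]

lemma Wcost_zero : Wcost p (0 : Measure X) 0 ≤ 0 := by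
  refine (Wcost_le (0 : Measure (X × X)) ?_ ?_).trans ?_
  · exact Measure.map_zero _
  · exact Measure.map_zero _
  · rw [lintegral_zero_measure]

lemma Wcost_sum_le {ι : Type*} (F : Finset ι) (μ ν : ι → Measure X) :
    Wcost p (∑ i ∈ F, μ i) (∑ i ∈ F, ν i) ≤ ∑ i ∈ F, Wcost p (μ i) (ν i) := by
  classical
  induction F using Finset.induction_on with
  | empty => simpa using Wcost_zero
  | insert _ _ hi ih =>
      rw [Finset.sum_insert hi, Finset.sum_insert hi, Finset.sum_insert hi]
      exact (Wcost_add_le _ _ _ _).trans (add_le_add le_rfl ih)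

end conv

/-! ### The unit cube -/

lemma unitCube_eq (d : ℕ) :
    unitCube d = (MeasurableEquiv.toLp 2 (Fin d → ℝ)).symm ⁻¹'
      (Set.pi Set.univ fun _ => Set.Icc (0:ℝ) 1) := by
  ext x
  simp only [unitCube, Set.mem_setOf_eq, Set.mem_preimage, Set.mem_pi, Set.mem_univ,
    Set.mem_Icc, forall_true_left]
  rfl

lemma measurableSet_unitCube (d : ℕ) : MeasurableSet (unitCube d) := by
  rw [unitCube_eq]
  exact (MeasurableSet.univ_pi fun _ => measurableSet_Icc).preimage (MeasurableEquiv.measurable _)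

lemma volume_unitCube (d : ℕ) : volume (unitCube d) = 1 := by
  rw [unitCube_eq, (EuclideanSpace.volume_preserving_symm_measurableEquiv_toLp (Fin d)).measure_preimage
    (MeasurableSet.univ_pi fun _ => measurableSet_Icc).nullMeasurableSet]
  rw [volume_pi_pi]
  simp [Real.volume_Icc]

instance LebProb (d : ℕ) : IsProbabilityMeasure (volume.restrict (unitCube d)) :=
  ⟨by rw [Measure.restrict_apply_univ]; exact volume_unitCube d⟩

lemma norm_le_of_mem_unitCube {d : ℕ} {w : EuclideanSpace ℝ (Fin d)} (hw : w ∈ unitCube d) :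
    ‖w‖ ≤ Real.sqrt d := by
  rw [EuclideanSpace.norm_eq]
  refine Real.sqrt_le_sqrt ?_
  calc ∑ i : Fin d, ‖w i‖ ^ 2 ≤ ∑ _i : Fin d, (1:ℝ) := by
        refine Finset.sum_le_sum fun i _ => ?_
        have h := hw i
        have habs : |w i| ≤ 1 := abs_le.2 ⟨by linarith [h.1], h.2⟩
        calc ‖w i‖ ^ 2 = |w i| ^ 2 := by rw [Real.norm_eq_abs]
          _ ≤ 1 ^ 2 := by nlinarith [abs_nonneg (w i)]
          _ = 1 := one_pow 2
    _ = d := by simp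

/-! ### Empirical measures -/

section emp
variable {X : Type*} [MeasurableSpace X] [MeasurableSingletonClass X]

lemma measurable_of_eq_off_finite {φ : X → X} {F : Set X} (hF : F.Finite)
    (h : ∀ w ∉ F, φ w = w) : Measurable φ := by
  intro B hB
  have hBe : φ ⁻¹' B = (φ ⁻¹' B ∩ F) ∪ (B \ F) := by
    ext w
    constructor
    · intro hw
      by_cases hwF : w ∈ F
      · exact Or.inl ⟨hw, hwF⟩
      · exact Or.inr ⟨by rw [← h w hwF]; exact hw, hwF⟩
    · rintro (⟨hw, _⟩ | ⟨hw, hwF⟩)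
      · exact hw
      · simpa [Set.mem_preimage, h w hwF] using hw
  rw [hBe]
  exact ((hF.subset Set.inter_subset_right).measurableSet).union (hB.diff hF.measurableSet)

variable {m : ℕ}

/-- Empirical measure of an `m`-tuple. -/
noncomputable def emp (m : ℕ) (x : Fin m → X) : Measure X :=
  (m : ℝ≥0∞)⁻¹ • ∑ k, Measure.dirac (x k)

omit [MeasurableSingletonClass X] in
lemma map_finset_sum {Y : Type*} [MeasurableSpace Y] {f : X → Y} (hf : Measurable f)
    {ι : Type*} (F : Finset ι) (μ : ι → Measure X) :
    (∑ i ∈ F, μ i).map f = ∑ i ∈ F, (μ i).map f := by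
  classical
  induction F using Finset.induction_on with
  | empty => simp
  | insert _ _ hi ih => rw [Finset.sum_insert hi, Finset.sum_insert hi, Measure.map_add _ _ hf, ih]

omit [MeasurableSingletonClass X] in
lemma emp_map {x : Fin m → X} {φ : X → X} (hφ : Measurable φ) :
    (emp m x).map φ = emp m (φ ∘ x) := by
  rw [emp, Measure.map_smul, map_finset_sum hφ, emp]
  simp [Measure.map_dirac' hφ]

omit [MeasurableSingletonClass X] in
lemma emp_univ (hm : m ≠ 0) (x : Fin m → X) : emp m x Set.univ = 1 := by
  simp only [emp, Measure.smul_apply, Measure.coe_finset_sum, Finset.sum_apply,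
    Measure.dirac_apply_of_mem (Set.mem_univ _), smul_eq_mul]
  rw [Finset.sum_const, Finset.card_univ, Fintype.card_fin]
  simp only [nsmul_eq_mul, mul_one]
  rw [ENNReal.inv_mul_cancel (by exact_mod_cast hm) (by simp)]

lemma emp_null {x : Fin m → X} {A : Set X} (hA : ∀ k, x k ∉ A) : emp m x A = 0 := by
  simp only [emp, Measure.smul_apply, Measure.coe_finset_sum, Finset.sum_apply, smul_eq_mul]
  rw [Finset.sum_eq_zero fun k _ => ?_, mul_zero]
  rw [Measure.dirac_apply, Set.indicator_of_notMem (hA k)]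

end emp

/-! ### The key perturbation estimate -/

lemma rpow_add_est {p η δ t : ℝ} (hp : 1 ≤ p) (hη : 0 < η) (hδ : 0 ≤ δ) (ht : 0 ≤ t) :
    (δ + t) ^ p ≤ (1 + η) ^ p * t ^ p + ((1 + 1/η) * δ) ^ p := by
  have hp0 : 0 ≤ p := by linarith
  rcases le_or_gt δ (η * t) with h | h
  · have h1 : δ + t ≤ (1 + η) * t := by nlinarith
    calc (δ+t)^p ≤ ((1+η)*t)^p := Real.rpow_le_rpow (by linarith) h1 hp0
      _ = (1+η)^p * t^p := Real.mul_rpow (by linarith) ht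
      _ ≤ _ := le_add_of_nonneg_right (Real.rpow_nonneg (by positivity) _)
  · have h1 : δ + t ≤ (1 + 1/η) * δ := by
      have ht' : t ≤ δ / η := by rw [le_div_iff₀ hη]; nlinarith
      have ht'' : t ≤ δ * (1/η) := by rw [mul_one_div]; exact ht'
      nlinarith
    calc (δ+t)^p ≤ ((1+1/η)*δ)^p := Real.rpow_le_rpow (by linarith) h1 hp0
      _ ≤ _ := le_add_of_nonneg_left (by positivity)

section euclid
variable {d m : ℕ}

lemma measurable_cost_integrand {p : ℝ} (hp0 : 0 ≤ p) :
    Measurable fun z : EuclideanSpace ℝ (Fin d) × EuclideanSpace ℝ (Fin d) =>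
      ENNReal.ofReal (dist z.1 z.2 ^ p) :=
  (((Real.continuous_rpow_const hp0).comp continuous_dist).measurable).ennreal_ofReal

lemma est {p : ℝ} (hp : 1 ≤ p) (hm : m ≠ 0) (ν : Measure (EuclideanSpace ℝ (Fin d)))
    (x y : Fin m → EuclideanSpace ℝ (Fin d)) (hx : Function.Injective x)
    {δ η : ℝ} (hδ0 : 0 ≤ δ) (hη : 0 < η) (hδ : ∀ k, dist (y k) (x k) ≤ δ) :
    Wcost p (emp m y) ν ≤ ENNReal.ofReal ((1+η)^p) * Wcost p (emp m x) ν
      + ENNReal.ofReal (((1+1/η)*δ)^p) := by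
  have hp0 : (0:ℝ) ≤ p := by linarith
  refine le_mul_sInf_add (ENNReal.ofReal_pos.2 (by positivity) |>.ne') ENNReal.ofReal_ne_top
    fun c hc => ?_
  obtain ⟨π, h1, h2, rfl⟩ := hc
  classical
  set φ : EuclideanSpace ℝ (Fin d) → EuclideanSpace ℝ (Fin d) :=
    fun w => if h : ∃ k, x k = w then y h.choose else w with hφdef
  have hφx : ∀ k, φ (x k) = y k := by
    intro k
    have h : ∃ k', x k' = x k := ⟨k, rfl⟩
    simp only [hφdef, dif_pos h]
    exact congrArg y (hx h.choose_spec)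
  have hφm : Measurable φ :=
    measurable_of_eq_off_finite (Set.finite_range x) fun w hw => dif_neg (by
      rintro ⟨k, rfl⟩; exact hw ⟨k, rfl⟩)
  have hpm : Measurable (Prod.map φ (id : EuclideanSpace ℝ (Fin d) → EuclideanSpace ℝ (Fin d))) :=
    hφm.prodMap measurable_id
  have hfst : (π.map (Prod.map φ id)).map Prod.fst = emp m y := by
    rw [Measure.map_map measurable_fst hpm]
    have heq : (Prod.fst ∘ Prod.map φ id :
        EuclideanSpace ℝ (Fin d) × EuclideanSpace ℝ (Fin d) → EuclideanSpace ℝ (Fin d))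
        = φ ∘ Prod.fst := rfl
    rw [heq, ← Measure.map_map hφm measurable_fst, h1, emp_map hφm]
    congr 1
    funext k; exact hφx k
  have hsnd : (π.map (Prod.map φ id)).map Prod.snd = ν := by
    rw [Measure.map_map measurable_snd hpm]
    have heq : (Prod.snd ∘ Prod.map φ id :
        EuclideanSpace ℝ (Fin d) × EuclideanSpace ℝ (Fin d) → EuclideanSpace ℝ (Fin d))
        = Prod.snd := rfl
    rw [heq, h2]
  refine (Wcost_le _ hfst hsnd).trans ?_
  rw [lintegral_map (measurable_cost_integrand hp0) hpm]
  have hπuniv : π Set.univ = 1 := by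
    have h := congrArg (fun μ : Measure (EuclideanSpace ℝ (Fin d)) => μ Set.univ) h1
    simp only [Measure.map_apply measurable_fst MeasurableSet.univ, Set.preimage_univ] at h
    rw [h, emp_univ hm x]
  have hae : ∀ᵐ w : EuclideanSpace ℝ (Fin d) × EuclideanSpace ℝ (Fin d) ∂π,
      w.1 ∈ Set.range x := by
    rw [ae_iff]
    have heq : {w : EuclideanSpace ℝ (Fin d) × EuclideanSpace ℝ (Fin d) |
        ¬ w.1 ∈ Set.range x} = Prod.fst ⁻¹' (Set.range x)ᶜ := rfl
    rw [heq, ← Measure.map_apply measurable_fst ((Set.finite_range x).measurableSet.compl), h1]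
    exact emp_null fun k => by simp
  have hbd : ∀ᵐ w : EuclideanSpace ℝ (Fin d) × EuclideanSpace ℝ (Fin d) ∂π,
      ENNReal.ofReal (dist (φ w.1) w.2 ^ p)
      ≤ ENNReal.ofReal ((1+η)^p * dist w.1 w.2 ^ p) + ENNReal.ofReal (((1+1/η)*δ)^p) := by
    filter_upwards [hae] with w hw
    obtain ⟨k, hk⟩ := hw
    have hd : dist (φ w.1) w.2 ≤ δ + dist w.1 w.2 := by
      rw [← hk, hφx k]
      calc dist (y k) w.2 ≤ dist (y k) (x k) + dist (x k) w.2 := dist_triangle _ _ _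
        _ ≤ δ + dist (x k) w.2 := add_le_add_left (hδ k) _
    calc ENNReal.ofReal (dist (φ w.1) w.2 ^ p)
        ≤ ENNReal.ofReal ((δ + dist w.1 w.2) ^ p) :=
          ENNReal.ofReal_le_ofReal (Real.rpow_le_rpow dist_nonneg hd hp0)
      _ ≤ ENNReal.ofReal ((1+η)^p * dist w.1 w.2 ^p + ((1+1/η)*δ)^p) :=
          ENNReal.ofReal_le_ofReal (rpow_add_est hp hη hδ0 dist_nonneg)
      _ ≤ _ := ENNReal.ofReal_add_le
  calc ∫⁻ w, ENNReal.ofReal (dist (Prod.map φ id w).1 (Prod.map φ id w).2 ^ p) ∂π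
      ≤ ∫⁻ w, (ENNReal.ofReal ((1+η)^p * dist w.1 w.2 ^ p)
          + ENNReal.ofReal (((1+1/η)*δ)^p)) ∂π :=
        lintegral_mono_ae hbd
    _ = ∫⁻ w, ENNReal.ofReal ((1+η)^p * dist w.1 w.2 ^ p) ∂π
          + ENNReal.ofReal (((1+1/η)*δ)^p) := by
        rw [lintegral_add_right _ measurable_const, lintegral_const, hπuniv, mul_one]
    _ = ENNReal.ofReal ((1+η)^p)
          * ∫⁻ w : EuclideanSpace ℝ (Fin d) × EuclideanSpace ℝ (Fin d),
              ENNReal.ofReal (dist w.1 w.2 ^ p) ∂π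
          + ENNReal.ofReal (((1+1/η)*δ)^p) := by
        congr 1
        rw [← lintegral_const_mul _ (measurable_cost_integrand hp0)]
        congr 1; funext w
        rw [← ENNReal.ofReal_mul (by positivity)]

/-! ### Finiteness -/

lemma emp_prob (hm : m ≠ 0) (x : Fin m → EuclideanSpace ℝ (Fin d)) :
    IsProbabilityMeasure (emp m x) :=
  ⟨emp_univ hm x⟩

lemma g_ne_top {p : ℝ} (hp0 : 0 ≤ p) (hm : m ≠ 0) (x : Fin m → EuclideanSpace ℝ (Fin d)) :
    Wcost p (emp m x) (volume.restrict (unitCube d)) ≠ ∞ := by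
  haveI : Nonempty (Fin m) := ⟨⟨0, Nat.pos_of_ne_zero hm⟩⟩
  haveI := emp_prob hm x
  haveI := LebProb d
  set ν := volume.restrict (unitCube d) with hν
  set B : ℝ := Finset.univ.sup' Finset.univ_nonempty (fun k => ‖x k‖) + Real.sqrt d with hB
  set π := (emp m x).prod ν with hπ
  have hfst : π.map Prod.fst = emp m x := by
    rw [hπ, Measure.map_fst_prod, measure_univ, one_smul]
  have hsnd : π.map Prod.snd = ν := by
    rw [hπ, Measure.map_snd_prod, measure_univ, one_smul]
  refine ne_top_of_le_ne_top (b := ENNReal.ofReal (B ^ p)) ENNReal.ofReal_ne_top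
    ((Wcost_le π hfst hsnd).trans ?_)
  have h1 : ∀ᵐ z : EuclideanSpace ℝ (Fin d) × EuclideanSpace ℝ (Fin d) ∂π,
      z.1 ∈ Set.range x := by
    rw [ae_iff]
    refine measure_mono_null (fun z hz => ?_)
      (show π ((Set.range x)ᶜ ×ˢ Set.univ) = 0 from ?_)
    · exact ⟨hz, Set.mem_univ _⟩
    · rw [hπ, Measure.prod_prod, emp_null fun k => by simp, zero_mul]
  have h2 : ∀ᵐ z : EuclideanSpace ℝ (Fin d) × EuclideanSpace ℝ (Fin d) ∂π,
      z.2 ∈ unitCube d := by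
    rw [ae_iff]
    refine measure_mono_null (fun z hz => ?_)
      (show π (Set.univ ×ˢ (unitCube d)ᶜ) = 0 from ?_)
    · exact ⟨Set.mem_univ _, hz⟩
    · rw [hπ, Measure.prod_prod, hν, Measure.restrict_apply (measurableSet_unitCube d).compl]
      simp
  have hbd : ∀ᵐ z : EuclideanSpace ℝ (Fin d) × EuclideanSpace ℝ (Fin d) ∂π,
      ENNReal.ofReal (dist z.1 z.2 ^ p) ≤ ENNReal.ofReal (B ^ p) := by
    filter_upwards [h1, h2] with z hz1 hz2
    refine ENNReal.ofReal_le_ofReal (Real.rpow_le_rpow dist_nonneg ?_ hp0)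
    obtain ⟨k, hk⟩ := hz1
    calc dist z.1 z.2 ≤ ‖z.1‖ + ‖z.2‖ := dist_le_norm_add_norm _ _
      _ ≤ Finset.univ.sup' Finset.univ_nonempty (fun k => ‖x k‖) + Real.sqrt d := by
          refine add_le_add ?_ (norm_le_of_mem_unitCube hz2)
          rw [← hk]
          exact Finset.le_sup' (fun k => ‖x k‖) (Finset.mem_univ k)
  calc ∫⁻ z, ENNReal.ofReal (dist z.1 z.2 ^ p) ∂π ≤ ∫⁻ _, ENNReal.ofReal (B ^ p) ∂π :=
        lintegral_mono_ae hbd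
    _ = ENNReal.ofReal (B ^ p) := by
        rw [lintegral_const]
        haveI : IsProbabilityMeasure π := by rw [hπ]; infer_instance
        rw [measure_univ, mul_one]

/-! ### Continuity and a.e.-measurability -/

/-- `W_p^p` of the empirical measure, as a function of the tuple. -/
noncomputable def gfun (d m : ℕ) (p : ℝ) : (Fin m → EuclideanSpace ℝ (Fin d)) → ℝ≥0∞ :=
  fun x => Wcost p (emp m x) (volume.restrict (unitCube d))

lemma isOpen_injective :
    IsOpen {y : Fin m → EuclideanSpace ℝ (Fin d) | Function.Injective y} := by
  have heq : {y : Fin m → EuclideanSpace ℝ (Fin d) | Function.Injective y}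
      = ⋂ (k) (l), {y : Fin m → EuclideanSpace ℝ (Fin d) | k ≠ l → y k ≠ y l} := by
    ext y
    simp only [Set.mem_setOf_eq, Set.mem_iInter]
    constructor
    · intro h k l hkl he; exact hkl (h he)
    · intro h a b hab; by_contra hne; exact h a b hne hab
  rw [heq]
  refine isOpen_iInter_of_finite fun k => isOpen_iInter_of_finite fun l => ?_
  by_cases hkl : k = l
  · convert isOpen_univ
    ext y; simp [hkl]
  · have heq2 : {y : Fin m → EuclideanSpace ℝ (Fin d) | k ≠ l → y k ≠ y l}
        = {y : Fin m → EuclideanSpace ℝ (Fin d) | y k ≠ y l} := by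
      ext y; simp [hkl]
    rw [heq2]
    exact isOpen_ne_fun (continuous_apply k) (continuous_apply l)

lemma continuousAt_gfun {p : ℝ} (hp : 1 ≤ p) (hm : m ≠ 0)
    {x : Fin m → EuclideanSpace ℝ (Fin d)}
    (hx : Function.Injective x) : ContinuousAt (gfun d m p) x := by
  have hp0 : (0:ℝ) ≤ p := by linarith
  have hgx : gfun d m p x ≠ ∞ := g_ne_top hp0 hm x
  rw [ContinuousAt, ENNReal.tendsto_nhds hgx]
  intro ε hε
  rcases eq_or_ne ε ∞ with rfl | hεt
  · filter_upwards with y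
    refine ⟨?_, le_top.trans_eq (by simp)⟩
    simp [ENNReal.sub_top]
  set G : ℝ≥0∞ := gfun d m p x with hG
  have hGε : G + ε ≠ ∞ := ENNReal.add_ne_top.2 ⟨hgx, hεt⟩
  have hε2 : (0:ℝ≥0∞) < ε / 2 := ENNReal.div_pos hε.ne' (by norm_num)
  have hε2t : ε / 2 ≠ ∞ := (ENNReal.div_lt_top hεt (by norm_num)).ne
  have h1 : Filter.Tendsto (fun η : ℝ => ENNReal.ofReal ((1+η)^p - 1) * (G + ε))
      (nhdsWithin (0:ℝ) (Set.Ioi 0)) (nhds 0) := by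
    have hc : Filter.Tendsto (fun η : ℝ => (1+η)^p - 1)
        (nhdsWithin (0:ℝ) (Set.Ioi 0)) (nhds 0) := by
      have hca : ContinuousAt (fun η : ℝ => (1+η)^p - 1) 0 :=
        (((continuous_const.add continuous_id).continuousAt).rpow_const (Or.inr hp0)).sub
          continuousAt_const
      have := hca.tendsto.mono_left (nhdsWithin_le_nhds (s := Set.Ioi (0:ℝ)))
      simpa using this
    have h2 := (ENNReal.tendsto_ofReal hc)
    have h3 := ENNReal.Tendsto.mul_const h2 (Or.inr hGε)
    simpa using h3
  obtain ⟨η, hη0, hηle⟩ : ∃ η : ℝ, 0 < η ∧ ENNReal.ofReal ((1+η)^p - 1) * (G + ε) ≤ ε / 2 := by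
    have h2 := h1.eventually (eventually_le_nhds hε2)
    rcases (h2.and self_mem_nhdsWithin).exists with ⟨η, hle, hmem⟩
    exact ⟨η, hmem, hle⟩
  have hone_le : (1:ℝ) ≤ (1+η)^p := by
    calc (1:ℝ) = 1 ^ p := (Real.one_rpow p).symm
      _ ≤ (1+η)^p := Real.rpow_le_rpow (by norm_num) (by linarith) hp0
  have haη : ENNReal.ofReal ((1+η)^p) = 1 + ENNReal.ofReal ((1+η)^p - 1) := by
    rw [← ENNReal.ofReal_one, ← ENNReal.ofReal_add (by norm_num) (by linarith)]
    norm_num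
  set r : ℝ := (ε/2).toReal with hr
  have hr0 : 0 < r := ENNReal.toReal_pos hε2.ne' hε2t
  have hη1 : (0:ℝ) < 1 + 1/η := by positivity
  set δ₀ : ℝ := r ^ p⁻¹ / (1 + 1/η) with hδ₀
  have hδ₀pos : 0 < δ₀ := by positivity
  have hbδ : ENNReal.ofReal (((1+1/η) * δ₀)^p) ≤ ε / 2 := by
    have heq : (1+1/η) * δ₀ = r ^ p⁻¹ := by
      rw [hδ₀, mul_div_assoc', mul_comm, mul_div_assoc, div_self hη1.ne', mul_one]
    rw [heq, Real.rpow_inv_rpow hr0.le (by linarith : p ≠ 0), hr,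
      ENNReal.ofReal_toReal hε2t]
  have hU : ∀ᶠ y in nhds x, Function.Injective y :=
    isOpen_injective.mem_nhds hx
  have hB : ∀ᶠ y in nhds x, ∀ k, dist (y k) (x k) ≤ δ₀ ∧ dist (x k) (y k) ≤ δ₀ := by
    filter_upwards [Metric.ball_mem_nhds x hδ₀pos] with y hy k
    have h1 := (dist_le_pi_dist y x k).trans (le_of_lt hy)
    exact ⟨h1, by rwa [dist_comm]⟩
  filter_upwards [hU, hB] with y hyI hyB
  have e1 := est hp hm (volume.restrict (unitCube d)) x y hx hδ₀pos.le hη0 fun k => (hyB k).1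
  have e2 := est hp hm (volume.restrict (unitCube d)) y x hyI hδ₀pos.le hη0 fun k => (hyB k).2
  set c : ℝ≥0∞ := ENNReal.ofReal ((1+η)^p - 1) with hc
  have hyle : gfun d m p y ≤ G + ε := by
    calc gfun d m p y ≤ ENNReal.ofReal ((1+η)^p) * G + ENNReal.ofReal (((1+1/η)*δ₀)^p) := e1
      _ = G + c * G + ENNReal.ofReal (((1+1/η)*δ₀)^p) := by rw [haη, add_mul, one_mul]
      _ ≤ G + c * (G + ε) + ε/2 := by
          gcongr
          exact le_self_add
      _ ≤ G + ε/2 + ε/2 := by gcongr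
      _ = G + ε := by rw [add_assoc, ENNReal.add_halves]
  refine ⟨?_, hyle⟩
  rw [tsub_le_iff_right]
  calc G ≤ ENNReal.ofReal ((1+η)^p) * gfun d m p y + ENNReal.ofReal (((1+1/η)*δ₀)^p) := e2
    _ = gfun d m p y + c * gfun d m p y + ENNReal.ofReal (((1+1/η)*δ₀)^p) := by
        rw [haη, add_mul, one_mul]
    _ ≤ gfun d m p y + c * (G + ε) + ε/2 := by gcongr
    _ ≤ gfun d m p y + ε/2 + ε/2 := by gcongr
    _ = gfun d m p y + ε := by rw [add_assoc, ENNReal.add_halves]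

lemma aemeasurable_gfun {p : ℝ} (hp : 1 ≤ p) (hm : m ≠ 0)
    (μ : Measure (Fin m → EuclideanSpace ℝ (Fin d)))
    (hμ : μ {y : Fin m → EuclideanSpace ℝ (Fin d) | ¬ Function.Injective y} = 0) :
    AEMeasurable (gfun d m p) μ := by
  have hUm : MeasurableSet {y : Fin m → EuclideanSpace ℝ (Fin d) | Function.Injective y} :=
    isOpen_injective.measurableSet
  have h1 : AEMeasurable (gfun d m p)
      (μ.restrict {y : Fin m → EuclideanSpace ℝ (Fin d) | Function.Injective y}) :=
    ContinuousOn.aemeasurable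
      (fun y hy => (continuousAt_gfun hp hm hy).continuousWithinAt) hUm
  rwa [Measure.restrict_eq_self_of_ae_mem ?_] at h1
  rw [Filter.eventually_iff, mem_ae_iff]
  exact hμ

end euclid

/-! ### Laws of tuples -/

section law
variable {d m : ℕ} {Ω : Type} [MeasurableSpace Ω] {P : Measure Ω} [IsProbabilityMeasure P]
variable {X : ℕ → Ω → EuclideanSpace ℝ (Fin d)} {σ : Fin m → ℕ}

lemma measurable_T (hmeas : ∀ i, Measurable (X i)) : Measurable (fun ω k => X (σ k) ω) :=
  measurable_pi_lambda _ fun k => hmeas (σ k)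

omit [IsProbabilityMeasure P] in
lemma law_T (hmeas : ∀ i, Measurable (X i))
    (hindep : iIndepFun X P)
    (hlaw : ∀ i, P.map (X i) = volume.restrict (unitCube d))
    (hσ : Function.Injective σ) :
    P.map (fun ω k => X (σ k) ω)
      = Measure.pi (fun _ : Fin m => volume.restrict (unitCube d)) := by
  haveI := LebProb d
  classical
  refine (Measure.pi_eq fun s hs => ?_).symm
  rw [Measure.map_apply (measurable_T hmeas) (MeasurableSet.univ_pi hs)]
  have hpre : (fun ω k => X (σ k) ω) ⁻¹' Set.pi Set.univ s
      = ⋂ k ∈ (Finset.univ : Finset (Fin m)), X (σ k) ⁻¹' s k := by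
    ext ω
    simp [Set.mem_pi]
  rw [hpre]
  set S : Finset ℕ := Finset.univ.map ⟨σ, hσ⟩ with hS
  set sets : ℕ → Set (EuclideanSpace ℝ (Fin d)) :=
    fun j => if h : ∃ k, σ k = j then s h.choose else Set.univ with hsets
  have hsetsσ : ∀ k, sets (σ k) = s k := by
    intro k
    have h : ∃ k', σ k' = σ k := ⟨k, rfl⟩
    simp only [hsets, dif_pos h]
    exact congrArg s (hσ h.choose_spec)
  have hiInter : (⋂ k ∈ (Finset.univ : Finset (Fin m)), X (σ k) ⁻¹' s k)
      = ⋂ j ∈ S, X j ⁻¹' sets j := by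
    ext ω
    simp only [Set.mem_iInter, hS, Finset.mem_map, Finset.mem_univ, true_implies,
      Function.Embedding.coeFn_mk]
    constructor
    · rintro h j ⟨k, -, rfl⟩
      rw [hsetsσ k]; exact h k
    · intro h k
      rw [← hsetsσ k]; exact h (σ k) ⟨k, trivial, rfl⟩
  rw [hiInter, hindep.measure_inter_preimage_eq_mul S (fun j hj => ?_)]
  · rw [hS, Finset.prod_map]
    refine Finset.prod_congr rfl fun k _ => ?_
    rw [Function.Embedding.coeFn_mk, hsetsσ k, ← hlaw (σ k),
      Measure.map_apply (hmeas (σ k)) (hs k)]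
  · simp only [hsets]
    split
    · exact hs _
    · exact MeasurableSet.univ

lemma law_noninj (hmeas : ∀ i, Measurable (X i))
    (hindep : iIndepFun X P)
    (hlaw : ∀ i, P.map (X i) = volume.restrict (unitCube d))
    (hσ : Function.Injective σ) (hd : 0 < d) :
    (P.map (fun ω k => X (σ k) ω))
      {y : Fin m → EuclideanSpace ℝ (Fin d) | ¬ Function.Injective y} = 0 := by
  haveI : Nonempty (Fin d) := ⟨⟨0, hd⟩⟩
  rw [show {y : Fin m → EuclideanSpace ℝ (Fin d) | ¬ Function.Injective y}
      = ({y : Fin m → EuclideanSpace ℝ (Fin d) | Function.Injective y})ᶜ from rfl,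
    Measure.map_apply (measurable_T hmeas) isOpen_injective.measurableSet.compl]
  refine measure_mono_null (fun ω hω => ?_)
    (show P (⋃ (k : Fin m) (l : Fin m) (_ : k ≠ l), {ω | X (σ k) ω = X (σ l) ω}) = 0 from ?_)
  · simp only [Set.mem_preimage, Set.mem_compl_iff, Set.mem_setOf_eq, Function.Injective,
      not_forall] at hω
    obtain ⟨k, l, hkl, hne⟩ := hω
    exact Set.mem_iUnion.2 ⟨k, Set.mem_iUnion.2 ⟨l, Set.mem_iUnion.2 ⟨hne, hkl⟩⟩⟩
  · refine measure_iUnion_null fun k => measure_iUnion_null fun l =>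
      measure_iUnion_null fun hkl => ?_
    have hind : IndepFun (X (σ k)) (X (σ l)) P := hindep.indepFun (hσ.ne hkl)
    have hpair : P.map (fun ω => (X (σ k) ω, X (σ l) ω))
        = (volume.restrict (unitCube d)).prod (volume.restrict (unitCube d)) := by
      have h := (indepFun_iff_map_prod_eq_prod_map_map (hmeas (σ k)).aemeasurable
        (hmeas (σ l)).aemeasurable).1 hind
      rw [h, hlaw, hlaw]
    have hdiag : MeasurableSet {z : EuclideanSpace ℝ (Fin d) × EuclideanSpace ℝ (Fin d) |
        z.1 = z.2} :=
      isClosed_eq continuous_fst continuous_snd |>.measurableSet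
    have hpreim : {ω | X (σ k) ω = X (σ l) ω}
        = (fun ω => (X (σ k) ω, X (σ l) ω)) ⁻¹'
          {z : EuclideanSpace ℝ (Fin d) × EuclideanSpace ℝ (Fin d) | z.1 = z.2} := rfl
    rw [hpreim, ← Measure.map_apply ((hmeas (σ k)).prodMk (hmeas (σ l))) hdiag, hpair]
    haveI := LebProb d
    rw [Measure.prod_apply hdiag]
    have hsingle : ∀ a : EuclideanSpace ℝ (Fin d),
        (volume.restrict (unitCube d)) (Prod.mk a ⁻¹'
          {z : EuclideanSpace ℝ (Fin d) × EuclideanSpace ℝ (Fin d) | z.1 = z.2}) = 0 := by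
      intro a
      have hset : (Prod.mk a ⁻¹'
          {z : EuclideanSpace ℝ (Fin d) × EuclideanSpace ℝ (Fin d) | z.1 = z.2}) = {a} := by
        ext w; simp [eq_comm]
      rw [hset]
      have hnt : Nontrivial (EuclideanSpace ℝ (Fin d)) := ⟨0, EuclideanSpace.single ⟨0, hd⟩ 1, by
        intro h
        have := congrArg (fun v : EuclideanSpace ℝ (Fin d) => v ⟨0, hd⟩) h
        simp [EuclideanSpace.single_apply] at this⟩
      have hle : (volume.restrict (unitCube d)) {a} ≤ volume {a} :=
        Measure.restrict_apply_le _ _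
      simpa [measure_singleton] using hle
    simp [hsingle]
end law

/-! ### Combinatorics -/

lemma count_mem_powersetCard {s : Finset ℕ} {a : ℕ} (ha : a ∈ s) {m : ℕ} (hm : 1 ≤ m) :
    (((s.powersetCard m).filter fun S => a ∈ S).card) = (s.card - 1).choose (m - 1) := by
  classical
  rw [← Finset.card_erase_of_mem ha, ← Finset.card_powersetCard (m - 1) (s.erase a)]
  refine Finset.card_bij' (fun S _ => S.erase a) (fun T _ => insert a T) ?_ ?_ ?_ ?_
  · intro S hS
    rw [Finset.mem_filter, Finset.mem_powersetCard] at hS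
    rw [Finset.mem_powersetCard]
    exact ⟨Finset.erase_subset_erase a hS.1.1,
      by rw [Finset.card_erase_of_mem hS.2, hS.1.2]⟩
  · intro T hT
    rw [Finset.mem_powersetCard] at hT
    have haT : a ∉ T := fun h => (Finset.mem_erase.1 (hT.1 h)).1 rfl
    rw [Finset.mem_filter, Finset.mem_powersetCard]
    refine ⟨⟨?_, ?_⟩, Finset.mem_insert_self a T⟩
    · intro x hx
      rcases Finset.mem_insert.1 hx with rfl | hx
      · exact ha
      · exact Finset.mem_of_mem_erase (hT.1 hx)
    · rw [Finset.card_insert_of_notMem haT, hT.2]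
      omega
  · intro S hS
    rw [Finset.mem_filter] at hS
    exact Finset.insert_erase hS.2
  · intro T hT
    rw [Finset.mem_powersetCard] at hT
    have haT : a ∉ T := fun h => (Finset.mem_erase.1 (hT.1 h)).1 rfl
    exact Finset.erase_insert haT

lemma sum_powersetCard_sum {M : Type*} [AddCommMonoid M] (n m : ℕ) (hm : 1 ≤ m) (v : ℕ → M) :
    ∑ S ∈ (Finset.range n).powersetCard m, ∑ i ∈ S, v i
      = (n - 1).choose (m - 1) • ∑ i ∈ Finset.range n, v i := by
  classical
  have h1 : ∀ S ∈ (Finset.range n).powersetCard m,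
      ∑ i ∈ S, v i = ∑ i ∈ Finset.range n, if i ∈ S then v i else 0 := by
    intro S hS
    rw [Finset.mem_powersetCard] at hS
    rw [Finset.sum_ite_mem, Finset.inter_eq_right.2 hS.1]
  rw [Finset.sum_congr rfl h1, Finset.sum_comm]
  rw [Finset.smul_sum]
  refine Finset.sum_congr rfl fun i hi => ?_
  rw [Finset.sum_ite, Finset.sum_const_zero, add_zero, Finset.sum_const,
    count_mem_powersetCard hi hm, Finset.card_range]

lemma avg_subsets {M : Type*} [AddCommMonoid M] [Module ℝ≥0∞ M]
    {n m : ℕ} (hm : 1 ≤ m) (hmn : m ≤ n) (v : ℕ → M) :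
    (n : ℝ≥0∞)⁻¹ • ∑ i ∈ Finset.range n, v i
      = ((n.choose m : ℝ≥0∞))⁻¹ • ∑ S ∈ (Finset.range n).powersetCard m,
          ((m : ℝ≥0∞)⁻¹ • ∑ i ∈ S, v i) := by
  classical
  rw [← Finset.smul_sum, sum_powersetCard_sum n m hm v, smul_smul,
    ← Nat.cast_smul_eq_nsmul ℝ≥0∞, smul_smul]
  congr 1
  have hn : 1 ≤ n := hm.trans hmn
  have hkey : n * (n - 1).choose (m - 1) = n.choose m * m := by
    obtain ⟨n', rfl⟩ : ∃ n', n = n' + 1 := ⟨n - 1, by omega⟩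
    obtain ⟨m', rfl⟩ : ∃ m', m = m' + 1 := ⟨m - 1, by omega⟩
    simpa using Nat.add_one_mul_choose_eq n' m'
  have hC0 : (n.choose m : ℝ≥0∞) ≠ 0 := by
    exact_mod_cast (Nat.choose_pos hmn).ne'
  have hm0 : (m : ℝ≥0∞) ≠ 0 := by exact_mod_cast (by omega : m ≠ 0)
  have hK0 : ((n - 1).choose (m - 1) : ℝ≥0∞) ≠ 0 := by
    exact_mod_cast (Nat.choose_pos (by omega : m - 1 ≤ n - 1)).ne'
  have hcast : ((n.choose m : ℝ≥0∞) * m) = (n : ℝ≥0∞) * ((n - 1).choose (m - 1) : ℝ≥0∞) := by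
    rw [← Nat.cast_mul, ← Nat.cast_mul, ← hkey]
  rw [← ENNReal.mul_inv (Or.inl hC0) (Or.inl (by simp)), hcast,
    ENNReal.mul_inv (Or.inl (by exact_mod_cast (by omega : n ≠ 0))) (Or.inl (by simp)),
    mul_assoc, ENNReal.inv_mul_cancel hK0 (by simp), mul_one]

end WcostAux

/-- Monotonicity of the expected matching cost to the reference measure: for
i.i.d. uniform points `X₁, X₂, …` on `[0,1]^d` and
`f(n) = E[W_p^p((1/n)∑_{i<n} δ_{X_i}, Leb)]`, one has `f(n) ≤ f(m)` for
`1 ≤ m ≤ n`. -/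
theorem expected_matching_cost_antitone (d : ℕ) (p : ℝ) (hp : 1 ≤ p)
    (Ω : Type) [MeasurableSpace Ω] (P : Measure Ω) [IsProbabilityMeasure P]
    (X : ℕ → Ω → EuclideanSpace ℝ (Fin d)) (hmeas : ∀ i, Measurable (X i))
    (hindep : iIndepFun X P)
    (hlaw : ∀ i, P.map (X i) = volume.restrict (unitCube d))
    (m n : ℕ) (hm : 1 ≤ m) (hmn : m ≤ n) :
    (∫⁻ ω, Wcost p
        ((n : ℝ≥0∞)⁻¹ • ∑ i ∈ Finset.range n, Measure.dirac (X i ω))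
        (volume.restrict (unitCube d)) ∂P)
      ≤ ∫⁻ ω, Wcost p
          ((m : ℝ≥0∞)⁻¹ • ∑ i ∈ Finset.range m, Measure.dirac (X i ω))
          (volume.restrict (unitCube d)) ∂P := by
  classical
  open WcostAux in
  have hm0 : m ≠ 0 := by omega
  set Leb := volume.restrict (unitCube d) with hLeb
  set C : ℕ := n.choose m with hC
  have hC0 : (C:ℝ≥0∞) ≠ 0 := by
    exact_mod_cast (Nat.choose_pos hmn).ne'
  have hCt : (C:ℝ≥0∞) ≠ ∞ := by simp
  set Pw := (Finset.range n).powersetCard m with hPw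
  have hcards : ∀ S ∈ Pw, S.card = m := fun S hS => (Finset.mem_powersetCard.1 hS).2
  -- integral of gfun composed with any injectively-indexed tuple is the same
  have key : ∀ (σ : Fin m → ℕ), Function.Injective σ →
      (∫⁻ ω, WcostAux.gfun d m p (fun k => X (σ k) ω) ∂P)
        = ∫⁻ y, WcostAux.gfun d m p y
            ∂(Measure.pi fun _ : Fin m => volume.restrict (unitCube d)) := by
    intro σ hσ
    have hT : Measurable (fun ω k => X (σ k) ω) := WcostAux.measurable_T hmeas
    have hlawT := WcostAux.law_T (P := P) hmeas hindep hlaw hσ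
    have haem : AEMeasurable (WcostAux.gfun d m p) (P.map (fun ω k => X (σ k) ω)) := by
      rcases Nat.eq_zero_or_pos d with hd | hd
      · subst hd
        haveI : Subsingleton (EuclideanSpace ℝ (Fin 0)) :=
          ⟨fun a b => by ext i; exact i.elim0⟩
        exact Subsingleton.measurable.aemeasurable
      · exact WcostAux.aemeasurable_gfun hp hm0 _
          (WcostAux.law_noninj hmeas hindep hlaw hσ hd)
    rw [← hlawT, lintegral_map' haem hT.aemeasurable]
  -- conversion of empirical measures over finsets to `emp`
  have hconv : ∀ (S : Finset ℕ) (hS : S.card = m) (ω : Ω),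
      (m:ℝ≥0∞)⁻¹ • ∑ i ∈ S, Measure.dirac (X i ω)
        = WcostAux.emp m (fun k => X ((S.orderIsoOfFin hS k : ℕ)) ω) := by
    intro S hS ω
    rw [WcostAux.emp]
    congr 1
    rw [← Finset.sum_coe_sort S (fun i => Measure.dirac (X i ω))]
    exact (Equiv.sum_comp (S.orderIsoOfFin hS).toEquiv
      (fun i : S => Measure.dirac (X (i:ℕ) ω))).symm
  -- the index functions
  have hσS : ∀ (S : Finset ℕ) (hS : S.card = m),
      Function.Injective (fun k => (S.orderIsoOfFin hS k : ℕ)) := by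
    intro S hS a b hab
    exact (S.orderIsoOfFin hS).injective (Subtype.coe_injective hab)
  -- step 1 : pointwise convexity bound
  have step1 : ∀ ω, Wcost p ((n : ℝ≥0∞)⁻¹ • ∑ i ∈ Finset.range n, Measure.dirac (X i ω)) Leb
      ≤ (C:ℝ≥0∞)⁻¹ * ∑ S ∈ Pw,
          Wcost p ((m:ℝ≥0∞)⁻¹ • ∑ i ∈ S, Measure.dirac (X i ω)) Leb := by
    intro ω
    have hLebavg : (C:ℝ≥0∞)⁻¹ • ∑ _S ∈ Pw, Leb = Leb := by
      rw [Finset.sum_const, ← Nat.cast_smul_eq_nsmul ℝ≥0∞, smul_smul]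
      rw [hPw, Finset.card_powersetCard, Finset.card_range, ← hC,
        ENNReal.inv_mul_cancel hC0 hCt, one_smul]
    calc Wcost p ((n : ℝ≥0∞)⁻¹ • ∑ i ∈ Finset.range n, Measure.dirac (X i ω)) Leb
        = Wcost p ((C:ℝ≥0∞)⁻¹ • ∑ S ∈ Pw, ((m:ℝ≥0∞)⁻¹ • ∑ i ∈ S, Measure.dirac (X i ω)))
            ((C:ℝ≥0∞)⁻¹ • ∑ _S ∈ Pw, Leb) := by
          rw [WcostAux.avg_subsets hm hmn (fun i => Measure.dirac (X i ω)), hLebavg, hC, hPw]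
      _ ≤ (C:ℝ≥0∞)⁻¹ * Wcost p (∑ S ∈ Pw, ((m:ℝ≥0∞)⁻¹ • ∑ i ∈ S, Measure.dirac (X i ω)))
            (∑ _S ∈ Pw, Leb) :=
          WcostAux.Wcost_smul_le _ (ENNReal.inv_ne_zero.2 hCt) (ENNReal.inv_ne_top.2 hC0) _ _
      _ ≤ (C:ℝ≥0∞)⁻¹ * ∑ S ∈ Pw,
            Wcost p ((m:ℝ≥0∞)⁻¹ • ∑ i ∈ S, Measure.dirac (X i ω)) Leb :=
          mul_le_mul_right (WcostAux.Wcost_sum_le Pw _ _) _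
  -- assemble
  calc (∫⁻ ω, Wcost p
        ((n : ℝ≥0∞)⁻¹ • ∑ i ∈ Finset.range n, Measure.dirac (X i ω)) Leb ∂P)
      ≤ ∫⁻ ω, (C:ℝ≥0∞)⁻¹ * ∑ S ∈ Pw,
          Wcost p ((m:ℝ≥0∞)⁻¹ • ∑ i ∈ S, Measure.dirac (X i ω)) Leb ∂P :=
        lintegral_mono step1
    _ = ∫⁻ ω, (C:ℝ≥0∞)⁻¹ * ∑ S ∈ Pw.attach,
          WcostAux.gfun d m p
            (fun k => X ((S.1.orderIsoOfFin (hcards S.1 S.2) k : ℕ)) ω) ∂P := by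
        refine lintegral_congr fun ω => ?_
        congr 1
        rw [← Finset.sum_attach Pw]
        refine Finset.sum_congr rfl fun S _ => ?_
        rw [WcostAux.gfun, ← hconv S.1 (hcards S.1 S.2) ω]
    _ = (C:ℝ≥0∞)⁻¹ * ∑ S ∈ Pw.attach, ∫⁻ ω,
          WcostAux.gfun d m p
            (fun k => X ((S.1.orderIsoOfFin (hcards S.1 S.2) k : ℕ)) ω) ∂P := by
        rw [lintegral_const_mul' _ _ (ENNReal.inv_ne_top.2 hC0)]
        congr 1
        refine lintegral_finset_sum' _ fun S _ => ?_
        have hT : Measurable (fun ω k => X ((S.1.orderIsoOfFin (hcards S.1 S.2) k : ℕ)) ω) :=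
          WcostAux.measurable_T hmeas
        have haem : AEMeasurable (WcostAux.gfun d m p)
            (P.map (fun ω k => X ((S.1.orderIsoOfFin (hcards S.1 S.2) k : ℕ)) ω)) := by
          rcases Nat.eq_zero_or_pos d with hd | hd
          · subst hd
            haveI : Subsingleton (EuclideanSpace ℝ (Fin 0)) :=
              ⟨fun a b => by ext i; exact i.elim0⟩
            exact Subsingleton.measurable.aemeasurable
          · exact WcostAux.aemeasurable_gfun hp hm0 _
              (WcostAux.law_noninj hmeas hindep hlaw (hσS S.1 (hcards S.1 S.2)) hd)
        exact haem.comp_aemeasurable' hT.aemeasurable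
    _ = (C:ℝ≥0∞)⁻¹ * ∑ _S ∈ Pw.attach, ∫⁻ y, WcostAux.gfun d m p y
          ∂(Measure.pi fun _ : Fin m => volume.restrict (unitCube d)) := by
        congr 1
        exact Finset.sum_congr rfl fun S _ =>
          key _ (hσS S.1 (hcards S.1 S.2))
    _ = ∫⁻ y, WcostAux.gfun d m p y
          ∂(Measure.pi fun _ : Fin m => volume.restrict (unitCube d)) := by
        rw [Finset.sum_const, Finset.card_attach, ← Nat.cast_smul_eq_nsmul ℝ≥0∞, smul_eq_mul,
          ← mul_assoc, hPw, Finset.card_powersetCard, Finset.card_range, ← hC,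
          ENNReal.inv_mul_cancel hC0 hCt, one_mul]
    _ = ∫⁻ ω, WcostAux.gfun d m p (fun k => X ((k : ℕ)) ω) ∂P :=
        (key (fun k => (k : ℕ)) Fin.val_injective).symm
    _ = ∫⁻ ω, Wcost p
          ((m : ℝ≥0∞)⁻¹ • ∑ i ∈ Finset.range m, Measure.dirac (X i ω)) Leb ∂P := by
        refine lintegral_congr fun ω => ?_
        rw [WcostAux.gfun, WcostAux.emp]
        congr 2
        exact Fin.sum_univ_eq_sum_range (fun i => Measure.dirac (X i ω)) m
end

section
/- Let p ≥ 1 and d ≥ 1, and suppose f : (0,∞) × ℕ → [0,∞) satisfies: (1) f(L, n) = L^p f(1, n) for all L > 0, n ∈ ℕ; (2) f(1, n) ≤ C₀ for all n and some constant C₀; (3) f(1, n) ≤ f(1, m) whenever m ≤ n. For L > 0 let N_L be a Poisson random variable with parameter L^d and set F(L) = E[f(L, N_L)]. Then limsup_{n→∞} n^{p/d} f(1, n) ≤ limsup_{L→∞} F(L) and liminf_{n→∞} n^{p/d} f(1, n) ≤ liminf_{L→∞} F(L). -/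
open MeasureTheory ProbabilityTheory Filter Real Nat Topology
open scoped NNReal ENNReal

lemma pois_apply (r : ℝ≥0) (k : ℕ) :
    ((poissonPMF r) k).toReal = poissonPMFReal r k := by
  rw [show (poissonPMF r) k = ENNReal.ofReal (poissonPMFReal r k) from rfl,
    ENNReal.toReal_ofReal poissonPMFReal_nonneg]

lemma pois_succ (r : ℝ≥0) (m : ℕ) :
    poissonPMFReal r (m+1) = poissonPMFReal r m * (r / (m+1)) := by
  unfold poissonPMFReal
  rw [Nat.factorial_succ]
  have h1 : ((m+1 : ℕ) : ℝ) ≠ 0 := by positivity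
  have h2 : ((m ! : ℕ) : ℝ) ≠ 0 := by positivity
  push_cast
  field_simp
  ring

lemma pois_term_le (r : ℝ≥0) (c : ℝ) (hc : 0 ≤ c) (n : ℕ) (hr : (r:ℝ) ≤ c*(n+1)) (k : ℕ) :
    poissonPMFReal r (k + (n+1)) ≤ poissonPMFReal r (n+1) * c^k := by
  induction k with
  | zero => simp
  | succ k ih =>
    have h1 : (k + (n+1)) + 1 = (k+1) + (n+1) := by ring
    have h2 : poissonPMFReal r ((k + (n+1)) + 1)
        = poissonPMFReal r (k + (n+1)) * ((r:ℝ) / ((k + (n+1) : ℕ) + 1)) := pois_succ r _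
    rw [← h1, h2]
    have hrc : (r:ℝ) / (((k + (n+1) : ℕ) : ℝ) + 1) ≤ c := by
      rw [div_le_iff₀ (by positivity)]
      calc (r:ℝ) ≤ c * (n+1) := hr
        _ ≤ c * (((k + (n+1) : ℕ) : ℝ) + 1) := by
            apply mul_le_mul_of_nonneg_left _ hc
            push_cast; linarith [Nat.cast_nonneg (α := ℝ) k]
    calc poissonPMFReal r (k + (n+1)) * ((r:ℝ) / (((k + (n+1) : ℕ) : ℝ) + 1))
        ≤ (poissonPMFReal r (n+1) * c^k) * c :=
          mul_le_mul ih hrc (by positivity) (mul_nonneg poissonPMFReal_nonneg (pow_nonneg hc k))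
      _ = poissonPMFReal r (n+1) * c^(k+1) := by ring

lemma pois_tail_le (r : ℝ≥0) (c : ℝ) (n : ℕ) (hc0 : 0 < c) (hc1 : c < 1)
    (hr : (r:ℝ) ≤ c*(n+1)) :
    ∑' k, poissonPMFReal r (k + (n+1)) ≤ poissonPMFReal r (n+1) * (1-c)⁻¹ := by
  have hsum : Summable (poissonPMFReal r) := (poissonPMFRealSum r).summable
  have htail : Summable (fun k => poissonPMFReal r (k + (n+1))) :=
    (summable_nat_add_iff (n+1)).2 hsum
  have hgeo : Summable (fun k : ℕ => poissonPMFReal r (n+1) * c^k) :=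
    (summable_geometric_of_lt_one hc0.le hc1).mul_left _
  calc ∑' k, poissonPMFReal r (k + (n+1))
      ≤ ∑' k, poissonPMFReal r (n+1) * c^k :=
        Summable.tsum_le_tsum (pois_term_le r c hc0.le n hr) htail hgeo
    _ = poissonPMFReal r (n+1) * (1-c)⁻¹ := by
        rw [tsum_mul_left, tsum_geometric_of_lt_one hc0.le hc1]

lemma pow_div_fact_le_exp (x : ℝ) (hx : 0 ≤ x) (m : ℕ) : x^m / m ! ≤ Real.exp x := by
  calc x^m / m ! ≤ ∑ i ∈ Finset.range (m+1), x^i / i ! :=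
        Finset.single_le_sum (f := fun i => x^i / (i ! : ℝ))
          (fun i _ => by positivity) (Finset.self_mem_range_succ m)
    _ ≤ Real.exp x := Real.sum_le_exp_of_nonneg hx _

lemma pois_val_le (r : ℝ≥0) (c : ℝ) (n : ℕ) (hc0 : 0 < c) (hn : 1 ≤ n)
    (hlo : c*((n:ℝ)-1) ≤ (r:ℝ)) (hhi : (r:ℝ) ≤ c*n) :
    poissonPMFReal r (n+1) ≤ Real.exp (c+1) * c * (c * Real.exp (1-c))^n := by
  set x : ℝ := (r:ℝ) with hxdef
  have hx0 : 0 ≤ x := r.coe_nonneg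
  have hm0 : (0:ℝ) < ((n+1 : ℕ):ℝ) := by positivity
  have h1 : x^(n+1) / (n+1)! ≤ (x / ((n+1:ℕ):ℝ))^(n+1) * Real.exp ((n+1 : ℕ)) := by
    have he : ((n+1 : ℕ):ℝ)^(n+1) / (n+1)! ≤ Real.exp ((n+1 : ℕ)) :=
      pow_div_fact_le_exp _ (by positivity) (n+1)
    have hx1 : x^(n+1) / (n+1)! = (x / ((n+1:ℕ):ℝ))^(n+1) * (((n+1:ℕ):ℝ)^(n+1) / (n+1)!) := by
      rw [div_pow]
      field_simp
    rw [hx1]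
    exact mul_le_mul_of_nonneg_left he (pow_nonneg (by positivity) _)
  have h2 : x / ((n+1:ℕ):ℝ) ≤ c := by
    rw [div_le_iff₀ hm0]
    calc x ≤ c * n := hhi
      _ ≤ c * ((n+1:ℕ):ℝ) := by
          apply mul_le_mul_of_nonneg_left _ hc0.le
          push_cast; linarith
  have h3 : (x / ((n+1:ℕ):ℝ))^(n+1) ≤ c^(n+1) :=
    pow_le_pow_left₀ (by positivity) h2 _
  have h4 : Real.exp (-x) ≤ Real.exp c * Real.exp (-c)^n := by
    rw [← Real.exp_nat_mul, ← Real.exp_add]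
    apply Real.exp_le_exp.2
    push_cast
    nlinarith
  have h5 : poissonPMFReal r (n+1) = Real.exp (-x) * (x^(n+1) / (n+1)!) := by
    unfold poissonPMFReal
    rw [mul_div_assoc]
  calc poissonPMFReal r (n+1)
      ≤ (Real.exp c * Real.exp (-c)^n) * (c^(n+1) * Real.exp ((n+1:ℕ))) := by
        rw [h5]
        apply mul_le_mul h4 _ (by positivity) (by positivity)
        calc x^(n+1) / (n+1)! ≤ (x / ((n+1:ℕ):ℝ))^(n+1) * Real.exp ((n+1 : ℕ)) := h1
          _ ≤ c^(n+1) * Real.exp ((n+1:ℕ)) :=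
              mul_le_mul_of_nonneg_right h3 (Real.exp_nonneg _)
    _ = Real.exp (c+1) * c * (c * Real.exp (1-c))^n := by
        rw [mul_pow]
        rw [show Real.exp (1-c) = Real.exp 1 * Real.exp (-c) by rw [← Real.exp_add]; ring_nf]
        rw [show Real.exp (c+1) = Real.exp c * Real.exp 1 by rw [← Real.exp_add]]
        rw [show ((n+1:ℕ):ℝ) = (n:ℝ)+1 by push_cast; ring]
        rw [show Real.exp ((n:ℝ)+1) = Real.exp 1 ^ n * Real.exp 1 by
          rw [← Real.exp_nat_mul, ← Real.exp_add]; ring_nf]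
        ring

lemma rho_lt_one {c : ℝ} (hc0 : 0 < c) (hc1 : c < 1) : c * Real.exp (1-c) < 1 := by
  have h := Real.add_one_lt_exp (x := c - 1) (by intro h; apply absurd (by linarith : c = 1); linarith)
  have h2 : c < Real.exp (c-1) := by linarith
  calc c * Real.exp (1-c) < Real.exp (c-1) * Real.exp (1-c) :=
        mul_lt_mul_of_pos_right h2 (Real.exp_pos _)
    _ = 1 := by rw [← Real.exp_add]; norm_num

lemma exists_c_rpow (q t : ℝ) (hq : 0 < q) (ht : t < 1) :
    ∃ c : ℝ, 0 < c ∧ c < 1 ∧ t < c ^ q := by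
  obtain ⟨s, hs1, hs2⟩ := exists_between (show max t 0 < 1 by simp [ht])
  have hs0 : 0 < s := lt_of_le_of_lt (le_max_right t 0) hs1
  refine ⟨s ^ q⁻¹, Real.rpow_pos_of_pos hs0 _, Real.rpow_lt_one hs0.le hs2 (by positivity), ?_⟩
  rw [← Real.rpow_mul hs0.le, inv_mul_cancel₀ hq.ne', Real.rpow_one]
  exact lt_of_le_of_lt (le_max_left t 0) hs1

lemma liminf_const_mul_ennreal {α : Type*} {f : Filter α} {u : α → ℝ≥0∞} {a : ℝ≥0∞}
    (ha_zero : a ≠ 0) (ha_top : a ≠ ⊤) :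
    (f.liminf fun x : α => a * u x) = a * f.liminf u := by
  let g := fun x : ℝ≥0∞ => a * x
  have hg_bij : Function.Bijective g :=
    Function.bijective_iff_has_inverse.mpr
      ⟨fun x => a⁻¹ * x,
        ⟨fun x => by simp [g, ← mul_assoc, ENNReal.inv_mul_cancel ha_zero ha_top], fun x => by
          simp [g, ← mul_assoc, ENNReal.mul_inv_cancel ha_zero ha_top]⟩⟩
  have hg_mono : StrictMono g :=
    Monotone.strictMono_of_injective (fun _ _ _ => by
      rwa [ENNReal.mul_le_mul_iff_right ha_zero ha_top]) hg_bij.1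
  let g_iso := StrictMono.orderIsoOfSurjective g hg_mono hg_bij.2
  exact (OrderIso.liminf_apply g_iso).symm

lemma F_lower (d : ℕ) (p : ℝ) (hp : 1 ≤ p)
    (f : ℝ → ℕ → ℝ) (C₀ : ℝ)
    (hnonneg : ∀ L > (0 : ℝ), ∀ n, 0 ≤ f L n)
    (hhom : ∀ L > (0 : ℝ), ∀ n, f L n = L ^ p * f 1 n)
    (hbdd : ∀ n, f 1 n ≤ C₀)
    (hmono : ∀ m n : ℕ, m ≤ n → f 1 n ≤ f 1 m)
    (F : ℝ → ℝ)
    (hF : ∀ L > (0 : ℝ),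
      F L = ∑' n : ℕ, ((poissonPMF (Real.toNNReal (L ^ d))) n).toReal * f L n)
    (c : ℝ) (hc0 : 0 < c) (hc1 : c < 1) (L : ℝ) (hL : 0 < L) (n : ℕ) (hn : 1 ≤ n)
    (hlo : c*((n:ℝ)-1) ≤ L^d) (hhi : L^d ≤ c*n) :
    L ^ p * f 1 n * (1 - Real.exp (c+1) * c * (c*Real.exp (1-c))^n * (1-c)⁻¹) ≤ F L := by
  set r : ℝ≥0 := Real.toNNReal (L ^ d) with hrdef
  have hLd0 : (0:ℝ) ≤ L ^ d := by positivity
  have hr : (r:ℝ) = L^d := Real.coe_toNNReal _ hLd0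
  have hLp0 : (0:ℝ) ≤ L ^ p := Real.rpow_nonneg hL.le p
  have hsum : Summable (poissonPMFReal r) := (poissonPMFRealSum r).summable
  have hFL : F L = ∑' k, poissonPMFReal r k * f L k := by
    rw [hF L hL]
    exact tsum_congr fun k => by rw [pois_apply]
  have hg_nonneg : ∀ k, 0 ≤ poissonPMFReal r k * f L k :=
    fun k => mul_nonneg poissonPMFReal_nonneg (hnonneg L hL k)
  have hgsumm : Summable (fun k => poissonPMFReal r k * f L k) := by
    apply Summable.of_nonneg_of_le hg_nonneg (fun k => ?_) (hsum.mul_right (L^p * C₀))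
    apply mul_le_mul_of_nonneg_left _ poissonPMFReal_nonneg
    rw [hhom L hL k]
    exact mul_le_mul_of_nonneg_left (hbdd k) hLp0
  -- partial sum lower bound of F L
  have hstep1 : ∑ k ∈ Finset.range (n+1), poissonPMFReal r k * f L k ≤ F L := by
    rw [hFL]
    exact Summable.sum_le_tsum _ (fun k _ => hg_nonneg k) hgsumm
  have hstep2 : (∑ k ∈ Finset.range (n+1), poissonPMFReal r k) * (L^p * f 1 n)
      ≤ ∑ k ∈ Finset.range (n+1), poissonPMFReal r k * f L k := by
    rw [Finset.sum_mul]
    apply Finset.sum_le_sum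
    intro k hk
    have hk' : k ≤ n := Nat.lt_succ_iff.1 (Finset.mem_range.1 hk)
    apply mul_le_mul_of_nonneg_left _ poissonPMFReal_nonneg
    rw [hhom L hL k]
    exact mul_le_mul_of_nonneg_left (hmono k n hk') hLp0
  -- partial sum of pmf
  have hrange : ∑ k ∈ Finset.range (n+1), poissonPMFReal r k
      = 1 - ∑' k, poissonPMFReal r (k + (n+1)) := by
    have h := hsum.sum_add_tsum_nat_add (n+1)
    rw [show ∑' i, poissonPMFReal r i = 1 from (poissonPMFRealSum r).tsum_eq] at h
    linarith
  have hhi' : (r:ℝ) ≤ c * ((n:ℕ)+1) := by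
    rw [hr]; push_cast
    calc L^d ≤ c*n := hhi
      _ ≤ c*((n:ℝ)+1) := by nlinarith
  have htail : ∑' k, poissonPMFReal r (k + (n+1))
      ≤ Real.exp (c+1) * c * (c*Real.exp (1-c))^n * (1-c)⁻¹ := by
    calc ∑' k, poissonPMFReal r (k + (n+1)) ≤ poissonPMFReal r (n+1) * (1-c)⁻¹ :=
          pois_tail_le r c n hc0 hc1 (by exact_mod_cast hhi')
      _ ≤ Real.exp (c+1) * c * (c*Real.exp (1-c))^n * (1-c)⁻¹ := by
          apply mul_le_mul_of_nonneg_right _ (inv_nonneg.2 (by linarith))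
          exact pois_val_le r c n hc0 hn (by rw [hr]; exact hlo) (by rw [hr]; exact hhi)
  have hpm : 1 - Real.exp (c+1) * c * (c*Real.exp (1-c))^n * (1-c)⁻¹
      ≤ ∑ k ∈ Finset.range (n+1), poissonPMFReal r k := by
    rw [hrange]; linarith
  calc L ^ p * f 1 n * (1 - Real.exp (c+1) * c * (c*Real.exp (1-c))^n * (1-c)⁻¹)
      = (1 - Real.exp (c+1) * c * (c*Real.exp (1-c))^n * (1-c)⁻¹) * (L^p * f 1 n) := by ring
    _ ≤ (∑ k ∈ Finset.range (n+1), poissonPMFReal r k) * (L^p * f 1 n) :=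
        mul_le_mul_of_nonneg_right hpm (mul_nonneg hLp0 (hnonneg 1 one_pos n))
    _ ≤ ∑ k ∈ Finset.range (n+1), poissonPMFReal r k * f L k := hstep2
    _ ≤ F L := hstep1

/-- De-Poissonization (Proposition 6.1): if `f(L,n) = L^p f(1,n)` is bounded in
`n` for `L = 1` and nonincreasing in `n`, and `F(L) = E[f(L,N_L)]` with `N_L`
Poisson of parameter `L^d`, then
`limsup_n n^{p/d} f(1,n) ≤ limsup_L F(L)` and
`liminf_n n^{p/d} f(1,n) ≤ liminf_L F(L)`. -/
theorem dePoissonization_one_sided (d : ℕ) (hd : 1 ≤ d) (p : ℝ) (hp : 1 ≤ p)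
    (f : ℝ → ℕ → ℝ) (C₀ : ℝ)
    (hnonneg : ∀ L > (0 : ℝ), ∀ n, 0 ≤ f L n)
    (hhom : ∀ L > (0 : ℝ), ∀ n, f L n = L ^ p * f 1 n)
    (hbdd : ∀ n, f 1 n ≤ C₀)
    (hmono : ∀ m n : ℕ, m ≤ n → f 1 n ≤ f 1 m)
    (F : ℝ → ℝ)
    (hF : ∀ L > (0 : ℝ),
      F L = ∑' n : ℕ, ((poissonPMF (Real.toNNReal (L ^ d))) n).toReal * f L n) :
    limsup (fun n : ℕ => ENNReal.ofReal ((n : ℝ) ^ (p / d) * f 1 n)) atTop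
        ≤ limsup (fun L : ℝ => ENNReal.ofReal (F L)) atTop
      ∧ liminf (fun n : ℕ => ENNReal.ofReal ((n : ℝ) ^ (p / d) * f 1 n)) atTop
        ≤ liminf (fun L : ℝ => ENNReal.ofReal (F L)) atTop := by
  have hd0 : (0:ℝ) < d := by exact_mod_cast Nat.succ_le_iff.1 hd
  have hdne : (d:ℝ) ≠ 0 := ne_of_gt hd0
  have hpd0 : 0 < p / d := div_pos (by linarith) hd0
  set u : ℕ → ℝ≥0∞ := fun n : ℕ => ENNReal.ofReal ((n : ℝ) ^ (p / d) * f 1 n) with hu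
  set v : ℝ → ℝ≥0∞ := fun L : ℝ => ENNReal.ofReal (F L) with hv
  constructor
  · -- limsup
    apply ENNReal.le_of_forall_lt_one_mul_le
    intro a ha
    have hat : a.toReal < 1 := by
      have := (ENNReal.toReal_lt_toReal ha.ne_top ENNReal.one_ne_top).2 ha
      simpa using this
    obtain ⟨c, hc0, hc1, htc⟩ := exists_c_rpow (p/d + 1) a.toReal (by positivity) hat
    have ha_le : a ≤ ENNReal.ofReal (c ^ (p/d+1)) := by
      rw [← ENNReal.ofReal_toReal ha.ne_top]
      exact ENNReal.ofReal_le_ofReal htc.le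
    set ρ : ℝ := c * Real.exp (1-c) with hρ
    have hρ0 : 0 ≤ ρ := by positivity
    have hρ1 : ρ < 1 := rho_lt_one hc0 hc1
    have htail0 : Tendsto (fun n : ℕ => Real.exp (c+1) * c * ρ^n * (1-c)⁻¹) atTop (𝓝 0) := by
      have h := ((tendsto_pow_atTop_nhds_zero_of_lt_one hρ0 hρ1).const_mul
        (Real.exp (c+1) * c)).mul_const (1-c)⁻¹
      simpa using h
    have hev_tail : ∀ᶠ n : ℕ in atTop, Real.exp (c+1) * c * ρ^n * (1-c)⁻¹ ≤ 1 - c :=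
      (htail0.eventually_lt_const (by linarith : (0:ℝ) < 1 - c)).mono fun n h => h.le
    have hLt : Tendsto (fun n : ℕ => (c * (n:ℝ)) ^ ((d:ℝ)⁻¹)) atTop atTop :=
      (tendsto_rpow_atTop (by positivity)).comp
        ((tendsto_natCast_atTop_atTop (R := ℝ)).const_mul_atTop hc0)
    have hev_main : ∀ᶠ n : ℕ in atTop,
        ENNReal.ofReal (c^(p/d+1)) * u n
          ≤ ENNReal.ofReal (F ((c * (n:ℝ)) ^ ((d:ℝ)⁻¹))) := by
      filter_upwards [hev_tail, eventually_ge_atTop 1] with n htl hn1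
      have hn1' : (1:ℝ) ≤ n := by exact_mod_cast hn1
      have hcn : (0:ℝ) < c * n := mul_pos hc0 (by linarith)
      have hLpos : (0:ℝ) < (c * (n:ℝ)) ^ ((d:ℝ)⁻¹) := Real.rpow_pos_of_pos hcn _
      have hLd : ((c * (n:ℝ)) ^ ((d:ℝ)⁻¹)) ^ d = c * n := by
        rw [← Real.rpow_natCast ((c * (n:ℝ)) ^ ((d:ℝ)⁻¹)) d, ← Real.rpow_mul hcn.le,
          inv_mul_cancel₀ hdne, Real.rpow_one]
      have hkey := F_lower d p hp f C₀ hnonneg hhom hbdd hmono F hF c hc0 hc1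
        _ hLpos n hn1 (by rw [hLd]; nlinarith) (le_of_eq hLd)
      have hLp : ((c * (n:ℝ)) ^ ((d:ℝ)⁻¹)) ^ p = c^(p/d) * (n:ℝ)^(p/d) := by
        rw [← Real.rpow_mul hcn.le, show (d:ℝ)⁻¹ * p = p/d from inv_mul_eq_div _ _]
        exact Real.mul_rpow hc0.le (Nat.cast_nonneg n)
      have hfn : 0 ≤ f 1 n := hnonneg 1 one_pos n
      have hreal : c^(p/d+1) * ((n:ℝ)^(p/d) * f 1 n)
          ≤ F ((c * (n:ℝ)) ^ ((d:ℝ)⁻¹)) := by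
        refine le_trans ?_ hkey
        rw [hLp, Real.rpow_add hc0, Real.rpow_one]
        have hA : 0 ≤ c^(p/d) * (n:ℝ)^(p/d) * f 1 n :=
          mul_nonneg (mul_nonneg (Real.rpow_nonneg hc0.le _)
            (Real.rpow_nonneg (Nat.cast_nonneg n) _)) hfn
        have h2 : c ≤ 1 - Real.exp (c+1) * c * ρ^n * (1-c)⁻¹ := by linarith
        calc c^(p/d) * c * ((n:ℝ)^(p/d) * f 1 n)
            = (c^(p/d) * (n:ℝ)^(p/d) * f 1 n) * c := by ring
          _ ≤ (c^(p/d) * (n:ℝ)^(p/d) * f 1 n)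
              * (1 - Real.exp (c+1) * c * ρ^n * (1-c)⁻¹) :=
              mul_le_mul_of_nonneg_left h2 hA
          _ = c^(p/d) * (n:ℝ)^(p/d) * f 1 n
              * (1 - Real.exp (c+1) * c * ρ^n * (1-c)⁻¹) := by ring
      rw [hu]
      rw [← ENNReal.ofReal_mul (Real.rpow_nonneg hc0.le _)]
      exact ENNReal.ofReal_le_ofReal hreal
    calc a * limsup u atTop
        ≤ ENNReal.ofReal (c^(p/d+1)) * limsup u atTop := mul_le_mul_of_nonneg_right ha_le _root_.zero_le
      _ = limsup (fun n : ℕ => ENNReal.ofReal (c^(p/d+1)) * u n) atTop :=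
          (ENNReal.limsup_const_mul_of_ne_top ENNReal.ofReal_ne_top).symm
      _ ≤ limsup (fun n : ℕ => v ((c * (n:ℝ)) ^ ((d:ℝ)⁻¹))) atTop :=
          limsup_le_limsup hev_main
      _ = limsup v (map (fun n : ℕ => (c * (n:ℝ)) ^ ((d:ℝ)⁻¹)) atTop) :=
          limsup_comp v _ atTop
      _ ≤ limsup v atTop := limsup_le_limsup_of_le hLt
  · -- liminf
    apply ENNReal.le_of_forall_lt_one_mul_le
    intro a ha
    have hat : a.toReal < 1 := by
      have := (ENNReal.toReal_lt_toReal ha.ne_top ENNReal.one_ne_top).2 ha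
      simpa using this
    obtain ⟨c, hc0, hc1, htc⟩ := exists_c_rpow (p/d + (p/d + 1)) a.toReal (by positivity) hat
    have ha_le : a ≤ ENNReal.ofReal (c ^ (p/d + (p/d+1))) := by
      rw [← ENNReal.ofReal_toReal ha.ne_top]
      exact ENNReal.ofReal_le_ofReal htc.le
    set ρ : ℝ := c * Real.exp (1-c) with hρ
    have hρ0 : 0 ≤ ρ := by positivity
    have hρ1 : ρ < 1 := rho_lt_one hc0 hc1
    have htail0 : Tendsto (fun n : ℕ => Real.exp (c+1) * c * ρ^n * (1-c)⁻¹) atTop (𝓝 0) := by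
      have h := ((tendsto_pow_atTop_nhds_zero_of_lt_one hρ0 hρ1).const_mul
        (Real.exp (c+1) * c)).mul_const (1-c)⁻¹
      simpa using h
    have hev_tail : ∀ᶠ n : ℕ in atTop, Real.exp (c+1) * c * ρ^n * (1-c)⁻¹ ≤ 1 - c :=
      (htail0.eventually_lt_const (by linarith : (0:ℝ) < 1 - c)).mono fun n h => h.le
    have hgap : ∀ᶠ n : ℕ in atTop, c * (n:ℝ) ≤ (n:ℝ) - 1 := by
      have ht : Tendsto (fun n : ℕ => (1-c) * (n:ℝ)) atTop atTop :=
        (tendsto_natCast_atTop_atTop (R := ℝ)).const_mul_atTop (by linarith)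
      exact (ht.eventually_ge_atTop 1).mono fun n h => by nlinarith [h]
    have hnt : Tendsto (fun x : ℝ => ⌈x^d / c⌉₊) atTop atTop := by
      have h1 : Tendsto (fun x : ℝ => x^d / c) atTop atTop :=
        (tendsto_pow_atTop (by omega : d ≠ 0)).atTop_div_const hc0
      exact tendsto_nat_ceil_atTop.comp h1
    have hev_main : ∀ᶠ L : ℝ in atTop,
        ENNReal.ofReal (c^(p/d + (p/d+1))) * u (⌈L^d / c⌉₊) ≤ v L := by
      filter_upwards [eventually_gt_atTop 0, hnt.eventually hev_tail,
        hnt.eventually hgap, hnt.eventually (eventually_ge_atTop 1)] with L hL htl hgp hn1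
      set n : ℕ := ⌈L^d / c⌉₊ with hn
      have hn1' : (1:ℝ) ≤ n := by exact_mod_cast hn1
      have hLd0 : (0:ℝ) ≤ L^d := by positivity
      have hceil1 : L^d ≤ c * n := by
        have h := Nat.le_ceil (L^d / c)
        rw [← hn] at h
        calc L^d = c * (L^d / c) := by field_simp
          _ ≤ c * n := mul_le_mul_of_nonneg_left h hc0.le
      have hceil2 : c * ((n:ℝ)-1) ≤ L^d := by
        have h := Nat.ceil_lt_add_one (by positivity : (0:ℝ) ≤ L^d / c)
        rw [← hn] at h
        have h2 : (n:ℝ) - 1 ≤ L^d / c := by linarith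
        calc c * ((n:ℝ)-1) ≤ c * (L^d / c) := mul_le_mul_of_nonneg_left h2 hc0.le
          _ = L^d := by field_simp
      have hkey := F_lower d p hp f C₀ hnonneg hhom hbdd hmono F hF c hc0 hc1
        L hL n hn1 hceil2 hceil1
      have hLpow : c^(p/d) * (c^(p/d) * (n:ℝ)^(p/d)) ≤ L^p := by
        have e1 : ((L^(d:ℕ) : ℝ))^(p/d) = L^p := by
          rw [← Real.rpow_natCast L d, ← Real.rpow_mul hL.le,
            show (d:ℝ) * (p/d) = p by field_simp]
        calc c^(p/d) * (c^(p/d) * (n:ℝ)^(p/d)) = (c * (c * (n:ℝ)))^(p/d) := by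
              rw [Real.mul_rpow hc0.le (by positivity), Real.mul_rpow hc0.le (Nat.cast_nonneg n)]
          _ ≤ (c * ((n:ℝ)-1))^(p/d) :=
              Real.rpow_le_rpow (by positivity) (mul_le_mul_of_nonneg_left hgp hc0.le) hpd0.le
          _ ≤ ((L^(d:ℕ) : ℝ))^(p/d) :=
              Real.rpow_le_rpow (by nlinarith) hceil2 hpd0.le
          _ = L^p := e1
      have hfn : 0 ≤ f 1 n := hnonneg 1 one_pos n
      have hreal : c^(p/d + (p/d+1)) * ((n:ℝ)^(p/d) * f 1 n) ≤ F L := by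
        refine le_trans ?_ hkey
        rw [Real.rpow_add hc0, Real.rpow_add hc0, Real.rpow_one]
        have hA : 0 ≤ L^p * f 1 n := mul_nonneg (Real.rpow_nonneg hL.le p) hfn
        have h2 : c ≤ 1 - Real.exp (c+1) * c * ρ^n * (1-c)⁻¹ := by linarith
        calc c^(p/d) * (c^(p/d) * c) * ((n:ℝ)^(p/d) * f 1 n)
            = (c^(p/d) * (c^(p/d) * (n:ℝ)^(p/d)) * f 1 n) * c := by ring
          _ ≤ (L^p * f 1 n) * c :=
              mul_le_mul_of_nonneg_right (mul_le_mul_of_nonneg_right hLpow hfn) hc0.le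
          _ ≤ (L^p * f 1 n) * (1 - Real.exp (c+1) * c * ρ^n * (1-c)⁻¹) :=
              mul_le_mul_of_nonneg_left h2 hA
          _ = L^p * f 1 n * (1 - Real.exp (c+1) * c * ρ^n * (1-c)⁻¹) := by ring
      rw [hu, hv]
      rw [← ENNReal.ofReal_mul (Real.rpow_nonneg hc0.le _)]
      exact ENNReal.ofReal_le_ofReal hreal
    calc a * liminf u atTop
        ≤ ENNReal.ofReal (c^(p/d + (p/d+1))) * liminf u atTop := mul_le_mul_of_nonneg_right ha_le _root_.zero_le
      _ ≤ ENNReal.ofReal (c^(p/d + (p/d+1)))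
            * liminf (fun L : ℝ => u (⌈L^d / c⌉₊)) atTop := by
          refine mul_le_mul_of_nonneg_left ?_ _root_.zero_le
          calc liminf u atTop
              ≤ liminf u (map (fun x : ℝ => ⌈x^d / c⌉₊) atTop) := liminf_le_liminf_of_le hnt
            _ = liminf (fun L : ℝ => u (⌈L^d / c⌉₊)) atTop := (liminf_comp u _ atTop).symm
      _ = liminf (fun L : ℝ => ENNReal.ofReal (c^(p/d + (p/d+1))) * u (⌈L^d / c⌉₊)) atTop :=
          (liminf_const_mul_ennreal
            (ne_of_gt (ENNReal.ofReal_pos.2 (Real.rpow_pos_of_pos hc0 _)))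
            ENNReal.ofReal_ne_top).symm
      _ ≤ liminf v atTop := liminf_le_liminf hev_main
end

section
/- Let p ≥ 1, d ≥ 1, and f satisfy the homogeneity, boundedness and monotonicity assumptions of the de-Poissonization setting (f(L,n) = L^p f(1,n); f(1,n) ≤ C₀; f(1,·) nonincreasing). With N_L Poisson of parameter L^d and F(L) = E[f(L, N_L)], one has lim_{n→∞} n^{p/d} f(1, n) = lim_{L→∞} F(L), in the sense that if one of the two limits exists then so does the other and they are equal. -/
open MeasureTheory ProbabilityTheory Filter

namespace DePoisson

noncomputable def q (lam : ℝ) (n : ℕ) : ℝ := Real.exp (-lam) * lam ^ n / n.factorial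

lemma q_nonneg {lam : ℝ} (hlam : 0 ≤ lam) (n : ℕ) : 0 ≤ q lam n := by
  unfold q; positivity

lemma hasSum_exp (x : ℝ) : HasSum (fun n : ℕ => x ^ n / n.factorial) (Real.exp x) := by
  have h := (Real.summable_pow_div_factorial x).hasSum
  rwa [show ∑' n : ℕ, x ^ n / n.factorial = Real.exp x by
    rw [Real.exp_eq_exp_ℝ, NormedSpace.exp_eq_tsum_div]] at h

lemma hasSum_q_mul_pow (lam r : ℝ) :
    HasSum (fun n => q lam n * r ^ n) (Real.exp (lam * (r - 1))) := by
  have h := (hasSum_exp (lam * r)).mul_left (Real.exp (-lam))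
  have he : Real.exp (-lam) * Real.exp (lam * r) = Real.exp (lam * (r - 1)) := by
    rw [← Real.exp_add]; ring_nf
  rw [he] at h
  have hf : (fun n => q lam n * r ^ n)
      = (fun n : ℕ => Real.exp (-lam) * ((lam * r) ^ n / n.factorial)) := by
    funext n; unfold q; rw [mul_pow]; ring
  rw [hf]; exact h

lemma hasSum_q (lam : ℝ) : HasSum (q lam) 1 := by
  have h := hasSum_q_mul_pow lam 1
  simpa using h

lemma summable_q (lam : ℝ) : Summable (q lam) := (hasSum_q lam).summable

noncomputable def tail (lam : ℝ) (k : ℕ) : ℝ := ∑' n, q lam (n + k)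

lemma summable_q_add (lam : ℝ) (k : ℕ) : Summable (fun n => q lam (n + k)) :=
  (summable_nat_add_iff k).mpr (summable_q lam)

lemma tail_nonneg {lam : ℝ} (hlam : 0 ≤ lam) (k : ℕ) : 0 ≤ tail lam k :=
  tsum_nonneg fun n => q_nonneg hlam _

lemma sum_range_add_tail (lam : ℝ) (k : ℕ) :
    ∑ n ∈ Finset.range k, q lam n + tail lam k = 1 := by
  rw [tail, Summable.sum_add_tsum_nat_add k (summable_q lam), (hasSum_q lam).tsum_eq]

lemma tail_le_one {lam : ℝ} (hlam : 0 ≤ lam) (k : ℕ) : tail lam k ≤ 1 := by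
  have h := sum_range_add_tail lam k
  have : 0 ≤ ∑ n ∈ Finset.range k, q lam n :=
    Finset.sum_nonneg fun n _ => q_nonneg hlam n
  linarith


noncomputable def Kl (δ : ℝ) : ℝ := -δ - (1 - δ) * Real.log (1 - δ)
noncomputable def Ku (δ : ℝ) : ℝ := δ - (1 + δ) * Real.log (1 + δ)

lemma log_ge_one_sub_inv {x : ℝ} (hx : 0 < x) (hx1 : x ≠ 1) : 1 - x⁻¹ < Real.log x := by
  have h := Real.log_lt_sub_one_of_pos (inv_pos.mpr hx) (by simpa using inv_eq_one.not.mpr hx1)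
  rw [Real.log_inv] at h
  linarith

lemma Kl_neg {δ : ℝ} (hδ0 : 0 < δ) (hδ1 : δ < 1) : Kl δ < 0 := by
  have h1 : (0:ℝ) < 1 - δ := by linarith
  have h := log_ge_one_sub_inv h1 (by linarith)
  have h2 : (1 - δ) * (1 - (1 - δ)⁻¹) < (1 - δ) * Real.log (1 - δ) :=
    mul_lt_mul_of_pos_left h h1
  have h3 : (1 - δ) * (1 - (1 - δ)⁻¹) = -δ := by field_simp; ring
  rw [Kl]; linarith [h3 ▸ h2]

lemma Ku_neg {δ : ℝ} (hδ0 : 0 < δ) : Ku δ < 0 := by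
  have h1 : (0:ℝ) < 1 + δ := by linarith
  have h := log_ge_one_sub_inv h1 (by linarith)
  have h2 : (1 + δ) * (1 - (1 + δ)⁻¹) < (1 + δ) * Real.log (1 + δ) :=
    mul_lt_mul_of_pos_left h h1
  have h3 : (1 + δ) * (1 - (1 + δ)⁻¹) = δ := by field_simp; ring
  rw [Ku]; linarith [h3 ▸ h2]

lemma lower_tail_bound {lam δ : ℝ} (hlam : 0 ≤ lam) (hδ0 : 0 < δ) (hδ1 : δ < 1)
    {m : ℕ} (hm : (m : ℝ) ≤ (1 - δ) * lam) :
    ∑ n ∈ Finset.range m, q lam n ≤ Real.exp (Kl δ * lam) := by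
  set r : ℝ := 1 - δ with hr
  have hr0 : 0 < r := by rw [hr]; linarith
  have hr1 : r < 1 := by rw [hr]; linarith
  have hrm : (0:ℝ) < r ^ m := pow_pos hr0 m
  -- each term bound
  have step1 : ∑ n ∈ Finset.range m, q lam n ≤ (∑ n ∈ Finset.range m, q lam n * r ^ n) / r ^ m := by
    rw [Finset.sum_div]
    refine Finset.sum_le_sum fun n hn => ?_
    rw [le_div_iff₀ hrm]
    exact mul_le_mul_of_nonneg_left
      (pow_le_pow_of_le_one hr0.le hr1.le (Finset.mem_range.mp hn).le) (q_nonneg hlam n)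
  have step2 : ∑ n ∈ Finset.range m, q lam n * r ^ n ≤ Real.exp (lam * (r - 1)) :=
    sum_le_hasSum _ (fun n _ => mul_nonneg (q_nonneg hlam n) (pow_pos hr0 n).le)
      (hasSum_q_mul_pow lam r)
  have step3 : (∑ n ∈ Finset.range m, q lam n * r ^ n) / r ^ m
      ≤ Real.exp (lam * (r - 1)) / r ^ m := by gcongr
  have hrpow : r ^ m = Real.exp (m * Real.log r) := by
    rw [← Real.log_pow, Real.exp_log hrm]
  have step4 : Real.exp (lam * (r - 1)) / r ^ m
      = Real.exp (lam * (r - 1) - m * Real.log r) := by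
    rw [hrpow, ← Real.exp_sub]
  have hlogr : Real.log r < 0 := Real.log_neg hr0 hr1
  have step5 : lam * (r - 1) - m * Real.log r ≤ Kl δ * lam := by
    have : (1 - δ) * lam * Real.log r ≤ (m : ℝ) * Real.log r :=
      mul_le_mul_of_nonpos_right hm hlogr.le
    rw [Kl, hr]; nlinarith
  calc ∑ n ∈ Finset.range m, q lam n
      ≤ (∑ n ∈ Finset.range m, q lam n * r ^ n) / r ^ m := step1
    _ ≤ Real.exp (lam * (r - 1)) / r ^ m := step3
    _ = Real.exp (lam * (r - 1) - m * Real.log r) := step4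
    _ ≤ Real.exp (Kl δ * lam) := Real.exp_le_exp.mpr step5

lemma upper_tail_bound {lam δ : ℝ} (hlam : 0 ≤ lam) (hδ0 : 0 < δ)
    {m : ℕ} (hm : (1 + δ) * lam ≤ m) :
    tail lam m ≤ Real.exp (Ku δ * lam) := by
  set r : ℝ := 1 + δ with hr
  have hr1 : 1 < r := by rw [hr]; linarith
  have hr0 : 0 < r := by linarith
  have hrm : (0:ℝ) < r ^ m := pow_pos hr0 m
  have hsum : Summable (fun n => q lam n * r ^ n) := (hasSum_q_mul_pow lam r).summable
  have hsum2 : Summable (fun n => q lam (n + m) * r ^ (n + m)) :=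
    (summable_nat_add_iff m).mpr hsum
  have step1 : tail lam m ≤ (∑' n, q lam (n + m) * r ^ (n + m)) / r ^ m := by
    rw [← tsum_div_const]
    refine Summable.tsum_le_tsum (fun n => ?_) (summable_q_add lam m) (hsum2.div_const _)
    rw [le_div_iff₀ hrm]
    exact mul_le_mul_of_nonneg_left
      (pow_le_pow_right₀ hr1.le (Nat.le_add_left m n)) (q_nonneg hlam _)
  have step2 : ∑' n, q lam (n + m) * r ^ (n + m) ≤ Real.exp (lam * (r - 1)) := by
    have := Summable.sum_add_tsum_nat_add m hsum
    have hpart : 0 ≤ ∑ n ∈ Finset.range m, q lam n * r ^ n :=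
      Finset.sum_nonneg fun n _ => mul_nonneg (q_nonneg hlam n) (pow_pos hr0 n).le
    rw [(hasSum_q_mul_pow lam r).tsum_eq] at this
    linarith
  have hrpow : r ^ m = Real.exp (m * Real.log r) := by
    rw [← Real.log_pow, Real.exp_log hrm]
  have hlogr : 0 < Real.log r := Real.log_pos hr1
  have step5 : lam * (r - 1) - m * Real.log r ≤ Ku δ * lam := by
    have : (1 + δ) * lam * Real.log r ≤ (m : ℝ) * Real.log r :=
      mul_le_mul_of_nonneg_right hm hlogr.le
    rw [Ku, hr]; nlinarith
  calc tail lam m ≤ (∑' n, q lam (n + m) * r ^ (n + m)) / r ^ m := step1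
    _ ≤ Real.exp (lam * (r - 1)) / r ^ m := by gcongr
    _ = Real.exp (lam * (r - 1) - m * Real.log r) := by rw [hrpow, ← Real.exp_sub]
    _ ≤ Real.exp (Ku δ * lam) := Real.exp_le_exp.mpr step5


section Sandwich

variable {C₀ : ℝ} {g : ℕ → ℝ} (hg0 : ∀ n, 0 ≤ g n) (hgC : ∀ n, g n ≤ C₀)
  (hganti : ∀ m n : ℕ, m ≤ n → g n ≤ g m)

include hg0 hgC in
lemma summable_qg {lam : ℝ} (hlam : 0 ≤ lam) : Summable (fun n => q lam n * g n) := by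
  refine Summable.of_nonneg_of_le (fun n => mul_nonneg (q_nonneg hlam n) (hg0 n))
    (fun n => mul_le_mul_of_nonneg_left (hgC n) (q_nonneg hlam n))
    ((summable_q lam).mul_right C₀)

include hg0 hgC hganti in
lemma sandwich_upper {lam : ℝ} (hlam : 0 ≤ lam) (m : ℕ) :
    ∑' n, q lam n * g n ≤ C₀ * (∑ n ∈ Finset.range m, q lam n) + g m := by
  have hs := summable_qg hg0 hgC hlam (g := g)
  rw [← Summable.sum_add_tsum_nat_add m hs]
  have h1 : ∑ n ∈ Finset.range m, q lam n * g n
      ≤ C₀ * ∑ n ∈ Finset.range m, q lam n := by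
    rw [Finset.mul_sum]
    exact Finset.sum_le_sum fun n _ => by
      rw [mul_comm C₀ (q lam n)]
      exact mul_le_mul_of_nonneg_left (hgC n) (q_nonneg hlam n)
  have h2 : ∑' n, q lam (n + m) * g (n + m) ≤ g m := by
    calc ∑' n, q lam (n + m) * g (n + m)
        ≤ ∑' n, q lam (n + m) * g m := by
          refine Summable.tsum_le_tsum (fun n => mul_le_mul_of_nonneg_left
            (hganti m (n + m) (Nat.le_add_left m n)) (q_nonneg hlam _)) ?_ ?_
          · exact (summable_nat_add_iff m).mpr hs
          · exact (summable_q_add lam m).mul_right _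
      _ = tail lam m * g m := by rw [tail, tsum_mul_right]
      _ ≤ 1 * g m := mul_le_mul_of_nonneg_right (tail_le_one hlam m) (hg0 m)
      _ = g m := one_mul _
  linarith

include hg0 hgC hganti in
lemma sandwich_lower {lam : ℝ} (hlam : 0 ≤ lam) (m : ℕ) :
    g m * (1 - tail lam (m + 1)) ≤ ∑' n, q lam n * g n := by
  have hs := summable_qg hg0 hgC hlam (g := g)
  have h1 : ∑ n ∈ Finset.range (m + 1), q lam n * g n ≤ ∑' n, q lam n * g n :=
    Summable.sum_le_tsum _ (fun n _ => mul_nonneg (q_nonneg hlam n) (hg0 n)) hs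
  have h2 : g m * (∑ n ∈ Finset.range (m + 1), q lam n)
      ≤ ∑ n ∈ Finset.range (m + 1), q lam n * g n := by
    rw [Finset.mul_sum]
    refine Finset.sum_le_sum fun n hn => ?_
    rw [mul_comm (g m)]
    exact mul_le_mul_of_nonneg_left
      (hganti n m (Nat.lt_succ_iff.mp (Finset.mem_range.mp hn))) (q_nonneg hlam n)
  have h3 : ∑ n ∈ Finset.range (m + 1), q lam n = 1 - tail lam (m + 1) := by
    have := sum_range_add_tail lam (m + 1); linarith
  rw [← h3]
  exact le_trans h2 h1

end Sandwich


lemma poly_exp {K : ℝ} (hK : K < 0) {d : ℕ} (hd : 1 ≤ d) (p : ℝ) :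
    Tendsto (fun L : ℝ => L ^ p * Real.exp (K * L ^ d)) atTop (nhds 0) := by
  have hd0 : (d : ℝ) ≠ 0 := Nat.cast_ne_zero.mpr (by omega)
  have h := (tendsto_rpow_mul_exp_neg_mul_atTop_nhds_zero (p / d) (-K) (by linarith)).comp
    (tendsto_pow_atTop (n := d) (by omega))
  refine h.congr' ?_
  filter_upwards [eventually_ge_atTop (0:ℝ)] with L hL
  have h1 : ((L ^ d : ℝ)) ^ (p / d) = L ^ p := by
    rw [← Real.rpow_natCast L d, ← Real.rpow_mul hL]
    congr 1
    field_simp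
  simp only [Function.comp_apply, h1, neg_neg]

lemma comp_limit {p : ℝ} {d : ℕ} (hd : 1 ≤ d) {g : ℕ → ℝ} {a c : ℝ} (hc : 0 < c)
    (hg : Tendsto (fun n : ℕ => (n : ℝ) ^ (p / d) * g n) atTop (nhds a))
    {m : ℝ → ℕ} (hmTop : Tendsto m atTop atTop)
    (hm : Tendsto (fun L => (m L : ℝ) / L ^ d) atTop (nhds c)) :
    Tendsto (fun L => L ^ p * g (m L)) atTop (nhds (a * c ^ (-(p / d)))) := by
  have h1 : Tendsto (fun L => ((m L : ℝ)) ^ (p / d) * g (m L)) atTop (nhds a) :=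
    hg.comp hmTop
  have h2 : Tendsto (fun L => ((m L : ℝ) / L ^ d) ^ (-(p / d))) atTop
      (nhds (c ^ (-(p / d)))) :=
    (Real.continuousAt_rpow_const c (-(p / d)) (Or.inl hc.ne')).tendsto.comp hm
  refine (h1.mul h2).congr' ?_
  filter_upwards [eventually_ge_atTop (1:ℝ), hmTop.eventually_ge_atTop 1] with L hL hmL
  have hL0 : (0:ℝ) < L := lt_of_lt_of_le one_pos hL
  have hm0 : (0:ℝ) < (m L : ℝ) := by exact_mod_cast Nat.lt_of_lt_of_le Nat.zero_lt_one hmL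
  have hLd : (0:ℝ) < L ^ d := pow_pos hL0 d
  have hA : (0:ℝ) < ((m L : ℝ)) ^ (p / d) := Real.rpow_pos_of_pos hm0 _
  have key : ((m L : ℝ) / L ^ d) ^ (-(p / d)) = L ^ p / ((m L : ℝ)) ^ (p / d) := by
    rw [Real.rpow_neg (div_nonneg hm0.le hLd.le), Real.div_rpow hm0.le hLd.le, inv_div]
    congr 1
    rw [← Real.rpow_natCast L d, ← Real.rpow_mul hL0.le]
    congr 1
    have hd0 : (d : ℝ) ≠ 0 := Nat.cast_ne_zero.mpr (by omega)
    field_simp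
  rw [key]
  field_simp


lemma exists_delta (a : ℝ) {ε : ℝ} (s : ℝ) (hε : 0 < ε) :
    ∃ δ : ℝ, 0 < δ ∧ δ < 1 ∧ |a * (1 - δ) ^ s - a| < ε ∧ |a * (1 + δ) ^ s - a| < ε := by
  have hc : ∀ b : ℝ, ContinuousAt (fun δ : ℝ => a * (1 + b * δ) ^ s) 0 := by
    intro b
    have h2 : ContinuousAt (fun δ : ℝ => 1 + b * δ) 0 := by fun_prop
    refine continuousAt_const.mul (ContinuousAt.rpow_const h2 (Or.inl ?_))
    simp
  have hT : ∀ b : ℝ, Tendsto (fun δ : ℝ => a * (1 + b * δ) ^ s) (nhds 0) (nhds a) := by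
    intro b
    have := (hc b).tendsto
    simpa [Real.one_rpow] using this
  have h1 : ∀ᶠ δ in nhds (0:ℝ), |a * (1 + (-1) * δ) ^ s - a| < ε := by
    have := Metric.tendsto_nhds.mp (hT (-1)) ε hε
    simpa [Real.dist_eq] using this
  have h2 : ∀ᶠ δ in nhds (0:ℝ), |a * (1 + 1 * δ) ^ s - a| < ε := by
    have := Metric.tendsto_nhds.mp (hT 1) ε hε
    simpa [Real.dist_eq] using this
  have h3 : ∀ᶠ δ in nhds (0:ℝ), δ < 1 := eventually_lt_nhds one_pos
  have hall : ∀ᶠ δ in nhdsWithin (0:ℝ) (Set.Ioi 0),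
      (δ < 1 ∧ |a * (1 + (-1) * δ) ^ s - a| < ε ∧ |a * (1 + 1 * δ) ^ s - a| < ε) ∧ 0 < δ :=
    (((h3.and (h1.and h2)).filter_mono nhdsWithin_le_nhds).and self_mem_nhdsWithin)
  obtain ⟨δ, ⟨hδ1, hA, hB⟩, hδ0⟩ := hall.exists
  refine ⟨δ, hδ0, hδ1, ?_, ?_⟩
  · rw [show (1:ℝ) - δ = 1 + (-1) * δ by ring]; exact hA
  · rw [show (1:ℝ) + δ = 1 + 1 * δ by ring]; exact hB

lemma floor_ratio {c : ℝ} (hc : 0 < c) {d : ℕ} (hd : 1 ≤ d) :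
    Tendsto (fun L : ℝ => ((⌊c * L ^ d⌋₊ : ℝ)) / L ^ d) atTop (nhds c) := by
  have hLd : Tendsto (fun L : ℝ => L ^ d) atTop atTop := tendsto_pow_atTop (by omega)
  have hlo : Tendsto (fun L : ℝ => c - (L ^ d)⁻¹) atTop (nhds c) := by
    simpa using tendsto_const_nhds.sub (tendsto_inv_atTop_zero.comp hLd)
  refine tendsto_of_tendsto_of_tendsto_of_le_of_le' hlo tendsto_const_nhds ?_ ?_
  · filter_upwards [hLd.eventually_gt_atTop 0] with L hL
    have h := Nat.sub_one_lt_floor (c * L ^ d)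
    rw [le_div_iff₀ hL]
    have : (c - (L ^ d)⁻¹) * L ^ d = c * L ^ d - 1 := by field_simp
    rw [this]
    linarith
  · filter_upwards [hLd.eventually_gt_atTop 0] with L hL
    rw [div_le_iff₀ hL]
    exact Nat.floor_le (by positivity)

lemma ceil_ratio {c : ℝ} (hc : 0 < c) {d : ℕ} (hd : 1 ≤ d) :
    Tendsto (fun L : ℝ => ((⌈c * L ^ d⌉₊ : ℝ)) / L ^ d) atTop (nhds c) := by
  have hLd : Tendsto (fun L : ℝ => L ^ d) atTop atTop := tendsto_pow_atTop (by omega)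
  have hhi : Tendsto (fun L : ℝ => c + (L ^ d)⁻¹) atTop (nhds c) := by
    simpa using tendsto_const_nhds.add (tendsto_inv_atTop_zero.comp hLd)
  refine tendsto_of_tendsto_of_tendsto_of_le_of_le' tendsto_const_nhds hhi ?_ ?_
  · filter_upwards [hLd.eventually_gt_atTop 0] with L hL
    rw [le_div_iff₀ hL]
    exact Nat.le_ceil _
  · filter_upwards [hLd.eventually_gt_atTop 0] with L hL
    rw [div_le_iff₀ hL]
    have h := Nat.ceil_lt_add_one (show (0:ℝ) ≤ c * L ^ d by positivity)
    have : (c + (L ^ d)⁻¹) * L ^ d = c * L ^ d + 1 := by field_simp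
    rw [this]
    linarith

end DePoisson
open DePoisson

/-- De-Poissonization, limit version: under the homogeneity, boundedness and
monotonicity assumptions, with `N_L` Poisson of parameter `L^d` and
`F(L) = E[f(L,N_L)]`, the limit `lim_n n^{p/d} f(1,n)` exists iff
`lim_{L→∞} F(L)` exists, and then they are equal. -/
theorem dePoissonization_limit (d : ℕ) (hd : 1 ≤ d) (p : ℝ) (hp : 1 ≤ p)
    (f : ℝ → ℕ → ℝ) (C₀ : ℝ)
    (hnonneg : ∀ L > (0 : ℝ), ∀ n, 0 ≤ f L n)
    (hhom : ∀ L > (0 : ℝ), ∀ n, f L n = L ^ p * f 1 n)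
    (hbdd : ∀ n, f 1 n ≤ C₀)
    (hmono : ∀ m n : ℕ, m ≤ n → f 1 n ≤ f 1 m)
    (F : ℝ → ℝ)
    (hF : ∀ L > (0 : ℝ),
      F L = ∑' n : ℕ, ((poissonPMF (Real.toNNReal (L ^ d))) n).toReal * f L n) :
    (∀ a : ℝ, Tendsto (fun n : ℕ => (n : ℝ) ^ (p / d) * f 1 n) atTop (nhds a) →
        Tendsto F atTop (nhds a))
      ∧ (∀ a : ℝ, Tendsto F atTop (nhds a) →
        Tendsto (fun n : ℕ => (n : ℝ) ^ (p / d) * f 1 n) atTop (nhds a)) := by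
  have hg0 : ∀ n, 0 ≤ f 1 n := hnonneg 1 one_pos
  have hC₀ : 0 ≤ C₀ := (hg0 0).trans (hbdd 0)
  have hFeq : ∀ L : ℝ, 0 < L → F L = L ^ p * ∑' n, q (L ^ d) n * f 1 n := by
    intro L hL
    have hLd : (0:ℝ) ≤ L ^ d := by positivity
    rw [hF L hL, ← tsum_mul_left]
    apply tsum_congr
    intro n
    have h1 : ((poissonPMF (Real.toNNReal (L ^ d))) n).toReal = q (L ^ d) n := by
      show (ENNReal.ofReal (poissonPMFReal _ n)).toReal = _
      rw [ENNReal.toReal_ofReal poissonPMFReal_nonneg]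
      unfold poissonPMFReal q
      rw [Real.coe_toNNReal _ hLd]
    rw [h1, hhom L hL n]
    ring
  constructor
  · -- Direction 1 : n-limit → F-limit
    intro a ha
    have ha0 : 0 ≤ a :=
      ge_of_tendsto ha (Eventually.of_forall fun n =>
        mul_nonneg (Real.rpow_nonneg (Nat.cast_nonneg n) _) (hg0 n))
    rw [Metric.tendsto_atTop]
    intro ε hε
    obtain ⟨δ, hδ0, hδ1, hA, hB⟩ := exists_delta a (-(p / d)) hε
    have h1δ : (0:ℝ) < 1 - δ := by linarith
    have h1δ' : (0:ℝ) < 1 + δ := by linarith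
    set m₁ : ℝ → ℕ := fun L => ⌊(1 - δ) * L ^ d⌋₊ with hm₁def
    set m₂ : ℝ → ℕ := fun L => ⌈(1 + δ) * L ^ d⌉₊ with hm₂def
    have hLd : Tendsto (fun L : ℝ => L ^ d) atTop atTop := tendsto_pow_atTop (by omega)
    have hm₁Top : Tendsto m₁ atTop atTop :=
      tendsto_nat_floor_atTop.comp (hLd.const_mul_atTop h1δ)
    have hm₂Top : Tendsto m₂ atTop atTop :=
      tendsto_nat_ceil_atTop.comp (hLd.const_mul_atTop h1δ')
    have lim1 : Tendsto (fun L => L ^ p * f 1 (m₁ L)) atTop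
        (nhds (a * (1 - δ) ^ (-(p / d)))) :=
      comp_limit hd h1δ ha hm₁Top (floor_ratio h1δ hd)
    have lim2 : Tendsto (fun L => L ^ p * f 1 (m₂ L)) atTop
        (nhds (a * (1 + δ) ^ (-(p / d)))) :=
      comp_limit hd h1δ' ha hm₂Top (ceil_ratio h1δ' hd)
    have err1 : Tendsto (fun L : ℝ => C₀ * (L ^ p * Real.exp (Kl δ * L ^ d))) atTop
        (nhds 0) := by
      simpa using (poly_exp (Kl_neg hδ0 hδ1) hd p).const_mul C₀
    have err2 : Tendsto (fun L : ℝ => C₀ * (L ^ p * Real.exp (Ku δ * L ^ d))) atTop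
        (nhds 0) := by
      simpa using (poly_exp (Ku_neg hδ0) hd p).const_mul C₀
    have upper_ev : ∀ᶠ L in atTop,
        F L ≤ C₀ * (L ^ p * Real.exp (Kl δ * L ^ d)) + L ^ p * f 1 (m₁ L) := by
      filter_upwards [eventually_gt_atTop (0:ℝ)] with L hL
      have hlam : (0:ℝ) ≤ L ^ d := by positivity
      have hLp : (0:ℝ) ≤ L ^ p := Real.rpow_nonneg hL.le p
      have hsw := sandwich_upper hg0 hbdd hmono hlam (m₁ L)
      have htail := lower_tail_bound hlam hδ0 hδ1
        (m := m₁ L) (Nat.floor_le (by positivity))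
      have hG : (∑' n, q (L ^ d) n * f 1 n)
          ≤ C₀ * Real.exp (Kl δ * L ^ d) + f 1 (m₁ L) := by
        have := mul_le_mul_of_nonneg_left htail hC₀
        linarith
      rw [hFeq L hL]
      calc L ^ p * ∑' n, q (L ^ d) n * f 1 n
          ≤ L ^ p * (C₀ * Real.exp (Kl δ * L ^ d) + f 1 (m₁ L)) :=
            mul_le_mul_of_nonneg_left hG hLp
        _ = C₀ * (L ^ p * Real.exp (Kl δ * L ^ d)) + L ^ p * f 1 (m₁ L) := by ring
    have lower_ev : ∀ᶠ L in atTop,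
        L ^ p * f 1 (m₂ L) - C₀ * (L ^ p * Real.exp (Ku δ * L ^ d)) ≤ F L := by
      filter_upwards [eventually_gt_atTop (0:ℝ)] with L hL
      have hlam : (0:ℝ) ≤ L ^ d := by positivity
      have hLp : (0:ℝ) ≤ L ^ p := Real.rpow_nonneg hL.le p
      have hsw := sandwich_lower hg0 hbdd hmono hlam (m₂ L)
      have htail : tail (L ^ d) (m₂ L + 1) ≤ Real.exp (Ku δ * L ^ d) := by
        refine upper_tail_bound hlam hδ0 ?_
        push_cast
        have := Nat.le_ceil ((1 + δ) * L ^ d)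
        linarith
      have htail0 : 0 ≤ tail (L ^ d) (m₂ L + 1) := tail_nonneg hlam _
      have hG : f 1 (m₂ L) - C₀ * Real.exp (Ku δ * L ^ d)
          ≤ ∑' n, q (L ^ d) n * f 1 n := by
        have hmul : f 1 (m₂ L) * tail (L ^ d) (m₂ L + 1)
            ≤ C₀ * Real.exp (Ku δ * L ^ d) :=
          mul_le_mul (hbdd _) htail htail0 hC₀
        nlinarith [hg0 (m₂ L)]
      rw [hFeq L hL]
      calc L ^ p * f 1 (m₂ L) - C₀ * (L ^ p * Real.exp (Ku δ * L ^ d))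
          = L ^ p * (f 1 (m₂ L) - C₀ * Real.exp (Ku δ * L ^ d)) := by ring
        _ ≤ L ^ p * ∑' n, q (L ^ d) n * f 1 n := mul_le_mul_of_nonneg_left hG hLp
    have hub : Tendsto (fun L : ℝ => C₀ * (L ^ p * Real.exp (Kl δ * L ^ d))
        + L ^ p * f 1 (m₁ L)) atTop (nhds (0 + a * (1 - δ) ^ (-(p / d)))) :=
      err1.add lim1
    have hlb : Tendsto (fun L : ℝ => L ^ p * f 1 (m₂ L)
        - C₀ * (L ^ p * Real.exp (Ku δ * L ^ d))) atTop
        (nhds (a * (1 + δ) ^ (-(p / d)) - 0)) := lim2.sub err2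
    have hub' : ∀ᶠ L in atTop, C₀ * (L ^ p * Real.exp (Kl δ * L ^ d))
        + L ^ p * f 1 (m₁ L) < a + ε := by
      refine hub.eventually_lt_const ?_
      have := (abs_lt.mp hA).2
      linarith
    have hlb' : ∀ᶠ L in atTop, a - ε < L ^ p * f 1 (m₂ L)
        - C₀ * (L ^ p * Real.exp (Ku δ * L ^ d)) := by
      refine hlb.eventually_const_lt ?_
      have := (abs_lt.mp hB).1
      linarith
    obtain ⟨N, hN⟩ := eventually_atTop.mp
      (((upper_ev.and lower_ev).and (hub'.and hlb')))
    refine ⟨N, fun L hL => ?_⟩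
    obtain ⟨⟨e1, e2⟩, e3, e4⟩ := hN L hL
    rw [Real.dist_eq, abs_lt]
    constructor <;> linarith
  · -- Direction 2 : F-limit → n-limit
    intro a ha
    have ha0 : 0 ≤ a := by
      refine ge_of_tendsto ha ?_
      filter_upwards [eventually_gt_atTop (0:ℝ)] with L hL
      rw [hFeq L hL]
      exact mul_nonneg (Real.rpow_nonneg hL.le p)
        (tsum_nonneg fun n => mul_nonneg (q_nonneg (by positivity) n) (hg0 n))
    rw [Metric.tendsto_atTop]
    intro ε hε
    obtain ⟨δ, hδ0, hδ1, hA, hB⟩ := exists_delta a (p / d) hε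
    have h1δ : (0:ℝ) < 1 - δ := by linarith
    have h1δ' : (0:ℝ) < 1 + δ := by linarith
    set Lp : ℕ → ℝ := fun n => ((n : ℝ) / (1 + δ)) ^ ((d : ℝ)⁻¹) with hLpdef
    set Lm : ℕ → ℝ := fun n => ((n : ℝ) / (1 - δ)) ^ ((d : ℝ)⁻¹) with hLmdef
    have hdinv : (0:ℝ) < (d : ℝ)⁻¹ := by
      have : (0:ℝ) < d := by exact_mod_cast (by omega : 0 < d)
      positivity
    have hLpTop : Tendsto Lp atTop atTop :=
      (tendsto_rpow_atTop hdinv).comp (tendsto_natCast_atTop_atTop.atTop_div_const h1δ')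
    have hLmTop : Tendsto Lm atTop atTop :=
      (tendsto_rpow_atTop hdinv).comp (tendsto_natCast_atTop_atTop.atTop_div_const h1δ)
    have hkey : ∀ (c : ℝ), 0 < c → ∀ n : ℕ, 1 ≤ n →
        (((n : ℝ) / c) ^ ((d : ℝ)⁻¹)) ^ d = (n : ℝ) / c ∧
        (n : ℝ) ^ (p / d) = c ^ (p / d) * ((((n : ℝ) / c) ^ ((d : ℝ)⁻¹)) ^ p) := by
      intro c hc n hn
      have hn0 : (0:ℝ) < n := by exact_mod_cast (by omega : 0 < n)
      have hx : (0:ℝ) ≤ (n : ℝ) / c := by positivity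
      refine ⟨Real.rpow_inv_natCast_pow hx (by omega), ?_⟩
      have h1 : (((n : ℝ) / c) ^ ((d : ℝ)⁻¹)) ^ p = ((n : ℝ) / c) ^ (p / d) := by
        rw [← Real.rpow_mul hx]
        congr 1
        rw [div_eq_inv_mul]
      rw [h1, Real.div_rpow hn0.le hc.le]
      have hcpd : (0:ℝ) < c ^ (p / d) := Real.rpow_pos_of_pos hc _
      field_simp
    have hub_ev : ∀ᶠ n : ℕ in atTop, (n : ℝ) ^ (p / d) * f 1 n ≤
        (1 + δ) ^ (p / d) *
          (F (Lp n) + C₀ * (Lp n ^ p * Real.exp (Ku δ * Lp n ^ d))) := by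
      filter_upwards [eventually_ge_atTop 1] with n hn
      obtain ⟨hpow, hid⟩ := hkey (1 + δ) h1δ' n hn
      have hn0 : (0:ℝ) < n := by exact_mod_cast (by omega : 0 < n)
      have hLpos : 0 < Lp n := Real.rpow_pos_of_pos (by positivity) _
      have hlam : (0:ℝ) ≤ Lp n ^ d := by positivity
      have hLpp : (0:ℝ) ≤ Lp n ^ p := Real.rpow_nonneg hLpos.le p
      have hsw := sandwich_lower hg0 hbdd hmono hlam n
      have htail : tail (Lp n ^ d) (n + 1) ≤ Real.exp (Ku δ * Lp n ^ d) := by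
        refine upper_tail_bound hlam hδ0 ?_
        rw [show Lp n ^ d = (n : ℝ) / (1 + δ) from hpow]
        have heq : (1 + δ) * ((n : ℝ) / (1 + δ)) = n := by field_simp
        rw [heq]
        push_cast
        linarith
      have htail0 : 0 ≤ tail (Lp n ^ d) (n + 1) := tail_nonneg hlam _
      have hstep : Lp n ^ p * f 1 n ≤
          F (Lp n) + C₀ * (Lp n ^ p * Real.exp (Ku δ * Lp n ^ d)) := by
        have h2 : Lp n ^ p * (f 1 n * (1 - tail (Lp n ^ d) (n + 1))) ≤ F (Lp n) := by
          rw [hFeq (Lp n) hLpos]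
          exact mul_le_mul_of_nonneg_left hsw hLpp
        have h3 : f 1 n * tail (Lp n ^ d) (n + 1) ≤ C₀ * Real.exp (Ku δ * Lp n ^ d) :=
          mul_le_mul (hbdd n) htail htail0 hC₀
        have h4 : Lp n ^ p * (f 1 n * tail (Lp n ^ d) (n + 1)) ≤
            Lp n ^ p * (C₀ * Real.exp (Ku δ * Lp n ^ d)) :=
          mul_le_mul_of_nonneg_left h3 hLpp
        nlinarith
      calc (n : ℝ) ^ (p / d) * f 1 n
          = (1 + δ) ^ (p / d) * (Lp n ^ p * f 1 n) := by rw [hid]; ring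
        _ ≤ (1 + δ) ^ (p / d) *
            (F (Lp n) + C₀ * (Lp n ^ p * Real.exp (Ku δ * Lp n ^ d))) :=
          mul_le_mul_of_nonneg_left hstep (Real.rpow_nonneg h1δ'.le _)
    have hlb_ev : ∀ᶠ n : ℕ in atTop,
        (1 - δ) ^ (p / d) *
          (F (Lm n) - C₀ * (Lm n ^ p * Real.exp (Kl δ * Lm n ^ d)))
          ≤ (n : ℝ) ^ (p / d) * f 1 n := by
      filter_upwards [eventually_ge_atTop 1] with n hn
      obtain ⟨hpow, hid⟩ := hkey (1 - δ) h1δ n hn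
      have hn0 : (0:ℝ) < n := by exact_mod_cast (by omega : 0 < n)
      have hLpos : 0 < Lm n := Real.rpow_pos_of_pos (by positivity) _
      have hlam : (0:ℝ) ≤ Lm n ^ d := by positivity
      have hLpp : (0:ℝ) ≤ Lm n ^ p := Real.rpow_nonneg hLpos.le p
      have hsw := sandwich_upper hg0 hbdd hmono hlam n
      have htail : ∑ k ∈ Finset.range n, q (Lm n ^ d) k ≤ Real.exp (Kl δ * Lm n ^ d) := by
        refine lower_tail_bound hlam hδ0 hδ1 ?_
        rw [show Lm n ^ d = (n : ℝ) / (1 - δ) from hpow]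
        have heq : (1 - δ) * ((n : ℝ) / (1 - δ)) = n := by field_simp
        rw [heq]
      have hstep : F (Lm n) - C₀ * (Lm n ^ p * Real.exp (Kl δ * Lm n ^ d)) ≤
          Lm n ^ p * f 1 n := by
        have h2 : F (Lm n) ≤ Lm n ^ p *
            (C₀ * Real.exp (Kl δ * Lm n ^ d) + f 1 n) := by
          rw [hFeq (Lm n) hLpos]
          refine mul_le_mul_of_nonneg_left (le_trans hsw ?_) hLpp
          have := mul_le_mul_of_nonneg_left htail hC₀
          linarith
        nlinarith
      calc (1 - δ) ^ (p / d) *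
            (F (Lm n) - C₀ * (Lm n ^ p * Real.exp (Kl δ * Lm n ^ d)))
          ≤ (1 - δ) ^ (p / d) * (Lm n ^ p * f 1 n) :=
            mul_le_mul_of_nonneg_left hstep (Real.rpow_nonneg h1δ.le _)
        _ = (n : ℝ) ^ (p / d) * f 1 n := by rw [hid]; ring
    have herrp : Tendsto (fun n : ℕ => Lp n ^ p * Real.exp (Ku δ * Lp n ^ d)) atTop
        (nhds 0) := (poly_exp (Ku_neg hδ0) hd p).comp hLpTop
    have herrm : Tendsto (fun n : ℕ => Lm n ^ p * Real.exp (Kl δ * Lm n ^ d)) atTop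
        (nhds 0) := (poly_exp (Kl_neg hδ0 hδ1) hd p).comp hLmTop
    have hubLim : Tendsto (fun n : ℕ => (1 + δ) ^ (p / d) *
        (F (Lp n) + C₀ * (Lp n ^ p * Real.exp (Ku δ * Lp n ^ d)))) atTop
        (nhds ((1 + δ) ^ (p / d) * (a + C₀ * 0))) :=
      tendsto_const_nhds.mul ((ha.comp hLpTop).add (herrp.const_mul C₀))
    have hlbLim : Tendsto (fun n : ℕ => (1 - δ) ^ (p / d) *
        (F (Lm n) - C₀ * (Lm n ^ p * Real.exp (Kl δ * Lm n ^ d)))) atTop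
        (nhds ((1 - δ) ^ (p / d) * (a - C₀ * 0))) :=
      tendsto_const_nhds.mul ((ha.comp hLmTop).sub (herrm.const_mul C₀))
    have hub' : ∀ᶠ n : ℕ in atTop, (1 + δ) ^ (p / d) *
        (F (Lp n) + C₀ * (Lp n ^ p * Real.exp (Ku δ * Lp n ^ d))) < a + ε := by
      refine hubLim.eventually_lt_const ?_
      have := (abs_lt.mp hB).2
      have heq : (1 + δ) ^ (p / d) * (a + C₀ * 0) = a * (1 + δ) ^ (p / d) := by ring
      rw [heq]
      linarith
    have hlb' : ∀ᶠ n : ℕ in atTop, a - ε < (1 - δ) ^ (p / d) *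
        (F (Lm n) - C₀ * (Lm n ^ p * Real.exp (Kl δ * Lm n ^ d))) := by
      refine hlbLim.eventually_const_lt ?_
      have := (abs_lt.mp hA).1
      have heq : (1 - δ) ^ (p / d) * (a - C₀ * 0) = a * (1 - δ) ^ (p / d) := by ring
      rw [heq]
      linarith
    obtain ⟨N, hN⟩ := eventually_atTop.mp ((hub_ev.and hlb_ev).and (hub'.and hlb'))
    refine ⟨N, fun n hn => ?_⟩
    obtain ⟨⟨e1, e2⟩, e3, e4⟩ := hN n hn
    rw [Real.dist_eq, abs_lt]
    constructor <;> linarith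
end

section
/- Let d ≥ 3, p ≥ 1, and let N_L be a Poisson random variable of parameter L^d, L ≥ 1. Suppose g : ℕ → [0, ∞) satisfies g(n) ≤ C₀ for all n (uniform boundedness) and let h(L, n) = (L^d / max(n,1)) g(n) for n ≥ 1, h(L, 0) = 0. If additionally h(L, n) ≤ C₁ L^p for all n, then E[ |h(L, N_L) − g(N_L)| ] ≤ C L^{−d/2 + p(q−1)/q} for any q > 1, where C depends on q, C₀, C₁, p, d. In particular, choosing q close to 1 (with 1 < q < 2p/(2p−d) when p > d/2), E[|h(L, N_L) − g(N_L)|] → 0 as L → ∞. -/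
open MeasureTheory ProbabilityTheory

open scoped Nat

private lemma exp_tsum'' (x : ℝ) : ∑' n : ℕ, x ^ n / n ! = Real.exp x := by
  rw [Real.exp_eq_exp_ℝ, NormedSpace.exp_eq_tsum_div]

private lemma pow_le_factorial_mul_exp' {y : ℝ} (hy : 0 ≤ y) (k : ℕ) :
    y ^ k ≤ k ! * Real.exp y := by
  have h1 : y ^ k / k ! ≤ Real.exp y := by
    calc y ^ k / k ! ≤ ∑ i ∈ Finset.range (k + 1), y ^ i / i ! :=
          Finset.single_le_sum (f := fun i => y ^ i / i !) (fun i _ => by positivity)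
            (Finset.self_mem_range_succ k)
      _ ≤ Real.exp y := Real.sum_le_exp_of_nonneg hy _
  rw [div_le_iff₀ (by positivity)] at h1
  linarith [h1]


private lemma abs_split' {x δ H B : ℝ} (hδ : 0 < δ) (hH0 : 0 ≤ H) (hHB : H ≤ B)
    {m : ℕ} (hm : 1 ≤ m) :
    |x| * H ≤ δ * H + x ^ (2 * m) / δ ^ (2 * m - 1) * B := by
  rcases le_or_gt |x| δ with h | h
  · have h2 : (0:ℝ) ≤ x ^ (2 * m) / δ ^ (2 * m - 1) * B := by
      have hx : (0:ℝ) ≤ x ^ (2 * m) := (even_two_mul m).pow_nonneg x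
      have hB : (0:ℝ) ≤ B := le_trans hH0 hHB
      positivity
    nlinarith [mul_le_mul_of_nonneg_right h hH0]
  · have hxd : δ ^ (2 * m - 1) ≤ |x| ^ (2 * m - 1) := pow_le_pow_left₀ hδ.le h.le _
    have key : |x| * δ ^ (2 * m - 1) ≤ x ^ (2 * m) := by
      calc |x| * δ ^ (2 * m - 1) ≤ |x| * |x| ^ (2 * m - 1) :=
            mul_le_mul_of_nonneg_left hxd (abs_nonneg x)
        _ = |x| ^ (2 * m) := by rw [← pow_succ']; congr 1; omega
        _ = x ^ (2 * m) := (even_two_mul m).pow_abs x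
    have hxx : |x| ≤ x ^ (2 * m) / δ ^ (2 * m - 1) := by
      rw [le_div_iff₀ (by positivity)]; exact key
    have hB : (0:ℝ) ≤ B := le_trans hH0 hHB
    calc |x| * H ≤ x ^ (2 * m) / δ ^ (2 * m - 1) * B := by
          apply mul_le_mul hxx hHB hH0
          exact le_trans (abs_nonneg x) hxx
      _ ≤ δ * H + x ^ (2 * m) / δ ^ (2 * m - 1) * B :=
          le_add_of_nonneg_left (by positivity)

private lemma mgf_aux' (lam s : ℝ) :
    (Summable fun n : ℕ => Real.exp (-lam) * lam ^ n / n ! * Real.exp (s * ((n : ℝ) - lam))) ∧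
    ∑' n : ℕ, Real.exp (-lam) * lam ^ n / n ! * Real.exp (s * ((n : ℝ) - lam))
      = Real.exp (lam * (Real.exp s - 1) - s * lam) := by
  have hterm : ∀ n : ℕ, Real.exp (-lam) * lam ^ n / n ! * Real.exp (s * ((n : ℝ) - lam))
      = (Real.exp (-lam) * Real.exp (-(s * lam))) * ((lam * Real.exp s) ^ n / n !) := by
    intro n
    have h1 : Real.exp (s * ((n : ℝ) - lam)) = Real.exp s ^ n * Real.exp (-(s * lam)) := by
      rw [← Real.exp_nat_mul, ← Real.exp_add]
      ring_nf
    rw [h1, mul_pow]; ring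
  constructor
  · exact Summable.congr (((Real.summable_pow_div_factorial (lam * Real.exp s)).mul_left
      (Real.exp (-lam) * Real.exp (-(s * lam))))) (fun n => (hterm n).symm)
  · rw [tsum_congr hterm, tsum_mul_left, exp_tsum'', ← Real.exp_add, ← Real.exp_add]
    ring_nf

private lemma poisson_moment' (lam : ℝ) (hlam : 1 ≤ lam) (m : ℕ) :
    (Summable fun n : ℕ => Real.exp (-lam) * lam ^ n / n ! * ((n : ℝ) - lam) ^ (2 * m)) ∧
    ∑' n : ℕ, Real.exp (-lam) * lam ^ n / n ! * ((n : ℝ) - lam) ^ (2 * m)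
      ≤ 2 * Real.exp 2 * (2 * m)! * lam ^ m := by
  have hlam0 : (0:ℝ) < lam := lt_of_lt_of_le one_pos hlam
  set t : ℝ := (Real.sqrt lam)⁻¹ with ht_def
  have hs1 : 1 ≤ Real.sqrt lam := by
    rw [show (1:ℝ) = Real.sqrt 1 by simp]
    exact Real.sqrt_le_sqrt hlam
  have hs0 : 0 < Real.sqrt lam := lt_of_lt_of_le one_pos hs1
  have ht0 : 0 < t := inv_pos.mpr hs0
  have ht1 : t ≤ 1 := by
    rw [ht_def]
    exact inv_le_one_of_one_le₀ hs1
  have ht2 : t ^ 2 = lam⁻¹ := by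
    rw [ht_def, inv_pow, Real.sq_sqrt hlam0.le]
  have htm : lam ^ m * t ^ (2 * m) = 1 := by
    rw [pow_mul, ht2, ← mul_pow, mul_inv_cancel₀ hlam0.ne', one_pow]
  -- pointwise bound
  have hpt : ∀ x : ℝ, x ^ (2 * m) ≤
      (2 * m)! * lam ^ m * (Real.exp (t * x) + Real.exp (-(t * x))) := by
    intro x
    have h1 : x ^ (2 * m) = lam ^ m * (t * x) ^ (2 * m) := by
      rw [mul_pow, ← mul_assoc, htm, one_mul]
    have h2 : (t * x) ^ (2 * m) = |t * x| ^ (2 * m) := ((even_two_mul m).pow_abs (t * x)).symm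
    have h3 : |t * x| ^ (2 * m) ≤ (2 * m)! * Real.exp |t * x| :=
      pow_le_factorial_mul_exp' (abs_nonneg _) _
    have h4 : Real.exp |t * x| ≤ Real.exp (t * x) + Real.exp (-(t * x)) := by
      rcases abs_cases (t * x) with ⟨he, _⟩ | ⟨he, _⟩ <;> rw [he] <;>
        [exact le_add_of_nonneg_right (Real.exp_pos _).le;
         exact le_add_of_nonneg_left (Real.exp_pos _).le]
    calc x ^ (2 * m) = lam ^ m * |t * x| ^ (2 * m) := by rw [h1, h2]
      _ ≤ lam ^ m * ((2 * m)! * (Real.exp (t * x) + Real.exp (-(t * x)))) := by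
          apply mul_le_mul_of_nonneg_left _ (by positivity)
          calc |t * x| ^ (2 * m) ≤ (2 * m)! * Real.exp |t * x| := h3
            _ ≤ (2 * m)! * (Real.exp (t * x) + Real.exp (-(t * x))) := by
                apply mul_le_mul_of_nonneg_left h4 (by positivity)
      _ = (2 * m)! * lam ^ m * (Real.exp (t * x) + Real.exp (-(t * x))) := by ring
  -- exp bound: for |s| ≤ 1, exp s - 1 - s ≤ s ^ 2
  have hexpb : ∀ s : ℝ, |s| ≤ 1 → Real.exp s - 1 - s ≤ s ^ 2 := by
    intro s hs
    have h := Real.exp_bound hs (n := 2) (by norm_num)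
    have h2 : ∑ i ∈ Finset.range 2, s ^ i / i ! = 1 + s := by
      simp [Finset.sum_range_succ]
    rw [h2] at h
    have h3 := (abs_le.mp h).2
    norm_num [Nat.factorial] at h3
    nlinarith [sq_abs s, sq_nonneg s]
  have harg : ∀ s : ℝ, |s| ≤ 1 → s ^ 2 = t ^ 2 →
      Real.exp (lam * (Real.exp s - 1) - s * lam) ≤ Real.exp 2 := by
    intro s hs hsq
    apply Real.exp_le_exp.mpr
    have h1 : Real.exp s - 1 - s ≤ s ^ 2 := hexpb s hs
    have h2 : lam * (Real.exp s - 1 - s) ≤ lam * s ^ 2 :=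
      mul_le_mul_of_nonneg_left h1 hlam0.le
    have h3 : lam * s ^ 2 = 1 := by rw [hsq, ht2, mul_inv_cancel₀ hlam0.ne']
    nlinarith
  obtain ⟨hsum₁, heq₁⟩ := mgf_aux' lam t
  obtain ⟨hsum₂, heq₂⟩ := mgf_aux' lam (-t)
  have hb₁ : Real.exp (lam * (Real.exp t - 1) - t * lam) ≤ Real.exp 2 :=
    harg t (by rw [abs_of_pos ht0]; exact ht1) rfl
  have hb₂ : Real.exp (lam * (Real.exp (-t) - 1) - (-t) * lam) ≤ Real.exp 2 :=
    harg (-t) (by rw [abs_neg, abs_of_pos ht0]; exact ht1) (by ring)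
  -- majorant
  set P : ℕ → ℝ := fun n => Real.exp (-lam) * lam ^ n / n ! with hP_def
  have hP0 : ∀ n, 0 ≤ P n := fun n => by rw [hP_def]; positivity
  have hmaj : ∀ n : ℕ, P n * ((n : ℝ) - lam) ^ (2 * m) ≤
      (2 * m)! * lam ^ m * (P n * Real.exp (t * ((n : ℝ) - lam))
        + P n * Real.exp (-t * ((n : ℝ) - lam))) := by
    intro n
    have := hpt ((n : ℝ) - lam)
    have h5 : P n * (((n:ℝ) - lam) ^ (2*m)) ≤
        P n * ((2 * m)! * lam ^ m * (Real.exp (t * ((n:ℝ) - lam)) +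
          Real.exp (-(t * ((n:ℝ) - lam))))) := mul_le_mul_of_nonneg_left this (hP0 n)
    calc P n * ((n : ℝ) - lam) ^ (2 * m) ≤ _ := h5
      _ = (2 * m)! * lam ^ m * (P n * Real.exp (t * ((n : ℝ) - lam))
        + P n * Real.exp (-t * ((n : ℝ) - lam))) := by rw [neg_mul]; ring
  have hsummaj : Summable (fun n : ℕ => (2 * m)! * lam ^ m *
      (P n * Real.exp (t * ((n : ℝ) - lam)) + P n * Real.exp (-t * ((n : ℝ) - lam)))) :=
    ((hsum₁.add hsum₂).mul_left _)
  have hnn : ∀ n : ℕ, 0 ≤ P n * ((n : ℝ) - lam) ^ (2 * m) := fun n =>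
    mul_nonneg (hP0 n) ((even_two_mul m).pow_nonneg _)
  have hsum : Summable (fun n : ℕ => P n * ((n : ℝ) - lam) ^ (2 * m)) :=
    Summable.of_nonneg_of_le hnn hmaj hsummaj
  refine ⟨hsum, ?_⟩
  calc ∑' n : ℕ, P n * ((n : ℝ) - lam) ^ (2 * m)
      ≤ ∑' n : ℕ, (2 * m)! * lam ^ m * (P n * Real.exp (t * ((n : ℝ) - lam))
        + P n * Real.exp (-t * ((n : ℝ) - lam))) := Summable.tsum_le_tsum hmaj hsum hsummaj
    _ = (2 * m)! * lam ^ m * ((∑' n : ℕ, P n * Real.exp (t * ((n : ℝ) - lam)))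
        + ∑' n : ℕ, P n * Real.exp (-t * ((n : ℝ) - lam))) := by
          rw [tsum_mul_left, Summable.tsum_add hsum₁ hsum₂]
    _ ≤ (2 * m)! * lam ^ m * (Real.exp 2 + Real.exp 2) := by
          apply mul_le_mul_of_nonneg_left _ (by positivity)
          rw [heq₁, heq₂]
          exact add_le_add hb₁ hb₂
    _ = 2 * Real.exp 2 * (2 * m)! * lam ^ m := by ring

set_option maxHeartbeats 2000000 in
/-- The de-Poissonization error estimate: with `N_L` Poisson of parameter
`L^d`, `g : ℕ → [0,C₀]`, `h(L,n) = (L^d/n) g(n)` for `n ≥ 1`, `h(L,0) = 0`,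
and `h(L,n) ≤ C₁ L^p`, for any `q > 1` there is a constant `C` (depending on
`q, C₀, C₁, p, d`) such that `E[|h(L,N_L) - g(N_L)|] ≤ C L^{-d/2 + p(q-1)/q}`
for `L ≥ 1`. -/
theorem dePoissonization_error_bound (d : ℕ) (hd : 3 ≤ d) (p : ℝ) (hp : 1 ≤ p)
    (C₀ C₁ : ℝ) (hC₀ : 0 ≤ C₀) (hC₁ : 0 ≤ C₁) (q : ℝ) (hq : 1 < q) :
    ∃ C : ℝ, 0 < C ∧ ∀ L : ℝ, 1 ≤ L → ∀ g : ℕ → ℝ,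
      (∀ n, 0 ≤ g n ∧ g n ≤ C₀) →
      (∀ n : ℕ, (if n = 0 then (0 : ℝ) else L ^ d / n * g n) ≤ C₁ * L ^ p) →
      (∑' n : ℕ, ((poissonPMF (Real.toNNReal (L ^ d))) n).toReal *
          |(if n = 0 then (0 : ℝ) else L ^ d / n * g n) - g n|)
        ≤ C * L ^ (-(d : ℝ) / 2 + p * (q - 1) / q) := by
  have hq0 : (0:ℝ) < q := lt_trans one_pos hq
  have hq1 : (0:ℝ) < q - 1 := by linarith
  set m : ℕ := max 1 ⌈q / (2 * (q - 1))⌉₊ with hm_def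
  have hm1 : 1 ≤ m := le_max_left _ _
  have hm0 : (0:ℝ) < m := by exact_mod_cast Nat.lt_of_lt_of_le Nat.zero_lt_one hm1
  have h2m : q / (q - 1) ≤ 2 * (m:ℝ) := by
    have h1 : q / (2 * (q - 1)) ≤ (⌈q / (2 * (q - 1))⌉₊ : ℝ) := Nat.le_ceil _
    have h2 : ((⌈q / (2 * (q - 1))⌉₊ : ℕ) : ℝ) ≤ (m:ℝ) := by
      exact_mod_cast le_max_right 1 ⌈q / (2 * (q - 1))⌉₊
    have h3 : q / (2 * (q - 1)) ≤ (m:ℝ) := le_trans h1 h2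
    rw [div_le_iff₀ (by positivity)] at h3 ⊢
    linarith
  refine ⟨3 * C₀ + 2 * Real.exp 2 * (2 * m)! * C₁ + 1, by positivity, ?_⟩
  intro L hL g hg hh
  have hL0 : (0:ℝ) < L := lt_of_lt_of_le one_pos hL
  set lam : ℝ := L ^ d with hlam_def
  have hlam1 : 1 ≤ lam := one_le_pow₀ hL
  have hlam0 : (0:ℝ) < lam := lt_of_lt_of_le one_pos hlam1
  set β : ℝ := p / (2 * m) - d / 2 with hβ_def
  set α : ℝ := -(d : ℝ) / 2 + p * (q - 1) / q with hα_def
  have hβα : β ≤ α := by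
    rw [hβ_def, hα_def]
    have h1 : p / (2 * (m:ℝ)) ≤ p * (q - 1) / q := by
      rw [div_le_div_iff₀ (by positivity) hq0]
      have h2 : q ≤ (q - 1) * (2 * m) := by
        rw [div_le_iff₀ hq1] at h2m; linarith
      nlinarith
    linarith
  set δ : ℝ := L ^ β with hδ_def
  have hδ0 : 0 < δ := Real.rpow_pos_of_pos hL0 β
  -- the pmf in real terms
  set P : ℕ → ℝ := fun n => Real.exp (-lam) * lam ^ n / n ! with hP_def
  have hP0 : ∀ n, 0 ≤ P n := fun n => by rw [hP_def]; positivity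
  have hP : ∀ n : ℕ, ((poissonPMF (Real.toNNReal lam)) n).toReal = P n := by
    intro n
    have h1 : (poissonPMF (Real.toNNReal lam)) n
        = ENNReal.ofReal (poissonPMFReal (Real.toNNReal lam) n) := rfl
    rw [h1, ENNReal.toReal_ofReal poissonPMFReal_nonneg]
    unfold poissonPMFReal
    rw [Real.coe_toNNReal _ hlam0.le]
  set F : ℕ → ℝ := fun n => P n * |(if n = 0 then (0:ℝ) else lam / n * g n) - g n| with hF_def
  set T1 : ℕ → ℝ := fun n => if n = 0 then C₀ * Real.exp (-lam) else 0 with hT1_def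
  set T2 : ℕ → ℝ := fun n =>
    δ * (2 * C₀ * Real.exp (-lam)) * (lam ^ (n + 1) / (n + 1)!) with hT2_def
  set T3 : ℕ → ℝ := fun n =>
    C₁ * L ^ p / δ ^ (2 * m - 1) / lam ^ (2 * m) * (P n * ((n:ℝ) - lam) ^ (2 * m)) with hT3_def
  have hT2nn : ∀ n, 0 ≤ T2 n := by
    intro n; rw [hT2_def]; positivity
  have hT3nn : ∀ n, 0 ≤ T3 n := by
    intro n; rw [hT3_def]
    apply mul_nonneg (by positivity)
    exact mul_nonneg (hP0 n) ((even_two_mul m).pow_nonneg _)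
  -- pointwise bound
  have hFA : ∀ n, F n ≤ T1 n + T2 n + T3 n := by
    intro n
    rcases Nat.eq_zero_or_pos n with hn | hn
    · subst hn
      have h1 : F 0 ≤ T1 0 := by
        have e0 : F 0 = Real.exp (-lam) * g 0 := by
          simp only [hF_def, hP_def, if_true]
          rw [zero_sub, abs_neg, abs_of_nonneg (hg 0).1]
          norm_num
        have e1 : T1 0 = C₀ * Real.exp (-lam) := by rw [hT1_def]; simp
        rw [e0, e1]
        calc Real.exp (-lam) * g 0 ≤ Real.exp (-lam) * C₀ :=
              mul_le_mul_of_nonneg_left (hg 0).2 (Real.exp_pos _).le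
          _ = C₀ * Real.exp (-lam) := mul_comm _ _
      linarith [hT2nn 0, hT3nn 0]
    · have hn' : n ≠ 0 := Nat.pos_iff_ne_zero.mp hn
      have hnR : (0:ℝ) < n := by exact_mod_cast hn
      set x : ℝ := ((n:ℝ) - lam) / lam with hx_def
      set H : ℝ := lam / n * g n with hH_def
      have hH0 : 0 ≤ H := mul_nonneg (by positivity) (hg n).1
      have hHB : H ≤ C₁ * L ^ p := by
        have := hh n; rw [if_neg hn'] at this; exact this
      have habs : |(if n = 0 then (0:ℝ) else lam / n * g n) - g n| = |x| * H := by
        rw [if_neg hn']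
        have h2 : lam / n * g n - g n = -(x * (lam / n * g n)) := by
          rw [hx_def]; field_simp; ring
        rw [h2, abs_neg, abs_mul, abs_of_nonneg hH0]
      have hsplit := abs_split' (x := x) (δ := δ) (H := H) (B := C₁ * L ^ p)
        hδ0 hH0 hHB hm1
      have hPH : P n * H ≤ 2 * C₀ * Real.exp (-lam) * (lam ^ (n + 1) / (n + 1)!) := by
        have e1 : P n * H = Real.exp (-lam) * (lam ^ (n + 1) / (n ! * n)) * g n := by
          rw [hP_def, hH_def, pow_succ]
          have hn1 : ((n !:ℝ)) ≠ 0 := by positivity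
          field_simp
        have e2 : Real.exp (-lam) * (lam ^ (n + 1) / (n ! * n)) * g n
            ≤ Real.exp (-lam) * (lam ^ (n + 1) * 2 / (n + 1)!) * C₀ := by
          apply mul_le_mul _ (hg n).2 (hg n).1 (by positivity)
          apply mul_le_mul_of_nonneg_left _ (Real.exp_pos _).le
          rw [div_le_div_iff₀ (by positivity) (by positivity)]
          have hfac : (((n + 1)!:ℕ):ℝ) ≤ 2 * ((n !:ℝ) * n) := by
            have h5 : (n + 1)! = (n + 1) * n ! := Nat.factorial_succ n
            have h6 : (n + 1) * n ! ≤ 2 * (n ! * n) := by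
              have : n + 1 ≤ 2 * n := by omega
              calc (n + 1) * n ! ≤ 2 * n * n ! := Nat.mul_le_mul_right _ this
                _ = 2 * (n ! * n) := by ring
            calc (((n + 1)!:ℕ):ℝ) = (((n+1) * n ! : ℕ):ℝ) := by rw [h5]
              _ ≤ ((2 * (n ! * n) : ℕ):ℝ) := by exact_mod_cast h6
              _ = 2 * ((n !:ℝ) * n) := by push_cast; ring
          have h7 : (0:ℝ) ≤ lam ^ (n + 1) := by positivity
          calc lam ^ (n + 1) * ((n + 1)!:ℝ) ≤ lam ^ (n + 1) * (2 * ((n !:ℝ) * n)) :=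
                mul_le_mul_of_nonneg_left hfac h7
            _ = lam ^ (n + 1) * 2 * ((n !:ℝ) * n) := by ring
        calc P n * H = Real.exp (-lam) * (lam ^ (n + 1) / (n ! * n)) * g n := e1
          _ ≤ Real.exp (-lam) * (lam ^ (n + 1) * 2 / (n + 1)!) * C₀ := e2
          _ = 2 * C₀ * Real.exp (-lam) * (lam ^ (n + 1) / (n + 1)!) := by ring
      have hT3eq : P n * (x ^ (2 * m) / δ ^ (2 * m - 1) * (C₁ * L ^ p)) = T3 n := by
        rw [hT3_def, hx_def, div_pow]
        have h8 : (lam ^ (2 * m) : ℝ) ≠ 0 := by positivity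
        have h9 : (δ ^ (2 * m - 1) : ℝ) ≠ 0 := by positivity
        field_simp
      calc F n = P n * (|x| * H) := by simp only [hF_def]; rw [habs]
        _ ≤ P n * (δ * H + x ^ (2 * m) / δ ^ (2 * m - 1) * (C₁ * L ^ p)) :=
            mul_le_mul_of_nonneg_left hsplit (hP0 n)
        _ = δ * (P n * H) + P n * (x ^ (2 * m) / δ ^ (2 * m - 1) * (C₁ * L ^ p)) := by ring
        _ ≤ δ * (2 * C₀ * Real.exp (-lam) * (lam ^ (n + 1) / (n + 1)!)) + T3 n := by
            rw [hT3eq]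
            exact add_le_add_left (mul_le_mul_of_nonneg_left hPH hδ0.le) _
        _ = T1 n + T2 n + T3 n := by
            rw [hT1_def, hT2_def]; simp only [if_neg hn']; ring
    -- summability
  have Sexp : Summable (fun k : ℕ => lam ^ k / k !) := Real.summable_pow_div_factorial lam
  have SP : Summable P := by
    apply Summable.congr (Sexp.mul_left (Real.exp (-lam)))
    intro n; rw [hP_def]; ring
  obtain ⟨Smom, Mbound⟩ := poisson_moment' lam hlam1 m
  have Smom' : Summable (fun n : ℕ => P n * ((n:ℝ) - lam) ^ (2 * m)) := by
    apply Summable.congr Smom; intro n; rw [hP_def]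
  have ST1 : Summable T1 := by
    apply summable_of_ne_finset_zero (s := {0})
    intro b hb
    simp only [Finset.mem_singleton] at hb
    rw [hT1_def]
    exact if_neg hb
  have Sshift : Summable (fun n : ℕ => lam ^ (n + 1) / ((n + 1)! : ℝ)) :=
    (summable_nat_add_iff 1).mpr Sexp
  have ST2 : Summable T2 := by
    apply Summable.congr (Sshift.mul_left (δ * (2 * C₀ * Real.exp (-lam))))
    intro n; rw [hT2_def]
  have ST3 : Summable T3 := by
    apply Summable.congr (Smom'.mul_left (C₁ * L ^ p / δ ^ (2 * m - 1) / lam ^ (2 * m)))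
    intro n; rw [hT3_def]
  have SA : Summable (fun n => T1 n + T2 n + T3 n) := (ST1.add ST2).add ST3
  have SF : Summable F := by
    apply Summable.of_nonneg_of_le _ hFA SA
    intro n; rw [hF_def]; exact mul_nonneg (hP0 n) (abs_nonneg _)
  -- tsum of the three pieces
  have hT1sum : ∑' n, T1 n = C₀ * Real.exp (-lam) := by
    rw [tsum_eq_single 0 (fun b hb => by simp [hT1_def, hb])]
    simp [hT1_def]
  have hshift_le : ∑' n : ℕ, lam ^ (n + 1) / ((n + 1)! : ℝ) ≤ Real.exp lam := by
    have h0 : Real.exp lam = lam ^ 0 / ((0! : ℕ) : ℝ)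
        + ∑' n : ℕ, lam ^ (n + 1) / ((n + 1)! : ℝ) := by
      rw [← exp_tsum'' lam]; exact Summable.tsum_eq_zero_add Sexp
    have h1 : (0:ℝ) ≤ lam ^ 0 / ((0! : ℕ) : ℝ) := by positivity
    linarith
  have hT2sum : ∑' n, T2 n ≤ 2 * C₀ * δ := by
    have e : ∑' n, T2 n
        = δ * (2 * C₀ * Real.exp (-lam)) * ∑' n : ℕ, lam ^ (n + 1) / ((n + 1)! : ℝ) := by
      rw [hT2_def, tsum_mul_left]
    rw [e]
    calc δ * (2 * C₀ * Real.exp (-lam)) * ∑' n : ℕ, lam ^ (n + 1) / ((n + 1)! : ℝ)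
        ≤ δ * (2 * C₀ * Real.exp (-lam)) * Real.exp lam :=
          mul_le_mul_of_nonneg_left hshift_le (by positivity)
      _ = 2 * C₀ * δ * (Real.exp (-lam) * Real.exp lam) := by ring
      _ = 2 * C₀ * δ := by rw [← Real.exp_add]; norm_num
  have hT3sum : ∑' n, T3 n ≤ C₁ * L ^ p / δ ^ (2 * m - 1) / lam ^ (2 * m)
      * (2 * Real.exp 2 * (2 * m)! * lam ^ m) := by
    have e : ∑' n, T3 n = C₁ * L ^ p / δ ^ (2 * m - 1) / lam ^ (2 * m)
        * ∑' n : ℕ, P n * ((n:ℝ) - lam) ^ (2 * m) := by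
      rw [hT3_def, tsum_mul_left]
    rw [e]
    apply mul_le_mul_of_nonneg_left _ (by positivity)
    calc ∑' n : ℕ, P n * ((n:ℝ) - lam) ^ (2 * m)
        = ∑' n : ℕ, Real.exp (-lam) * lam ^ n / n ! * ((n:ℝ) - lam) ^ (2 * m) := by
          rw [hP_def]
      _ ≤ 2 * Real.exp 2 * (2 * m)! * lam ^ m := Mbound
  -- the rpow algebra
  have hrw : L ^ p / δ ^ (2 * m - 1) / lam ^ (2 * m) * lam ^ m = L ^ β := by
    have h1 : δ ^ (2 * m - 1) = L ^ (β * ((2 * m - 1 : ℕ) : ℝ)) := by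
      rw [hδ_def, ← Real.rpow_natCast (L ^ β) (2 * m - 1), ← Real.rpow_mul hL0.le]
    have h2 : lam ^ (2 * m) = L ^ ((d : ℝ) * ((2 * m : ℕ) : ℝ)) := by
      rw [hlam_def, ← Real.rpow_natCast L d, ← Real.rpow_natCast (L ^ ((d:ℕ):ℝ)) (2 * m),
        ← Real.rpow_mul hL0.le]
    have h3 : lam ^ m = L ^ ((d : ℝ) * ((m : ℕ) : ℝ)) := by
      rw [hlam_def, ← Real.rpow_natCast L d, ← Real.rpow_natCast (L ^ ((d:ℕ):ℝ)) m,
        ← Real.rpow_mul hL0.le]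
    rw [h1, h2, h3, ← Real.rpow_sub hL0, ← Real.rpow_sub hL0, ← Real.rpow_add hL0]
    congr 1
    have hc : ((2 * m - 1 : ℕ) : ℝ) = 2 * (m:ℝ) - 1 := by
      rw [Nat.cast_sub (by omega)]
      push_cast; ring
    rw [hc, hβ_def]
    push_cast
    field_simp
    ring
  have hexp_le : Real.exp (-lam) ≤ L ^ β := by
    have h1 : Real.exp (-lam) ≤ lam⁻¹ := by
      rw [Real.exp_neg]
      exact inv_anti₀ hlam0 (by linarith [Real.add_one_le_exp lam])
    have h2 : lam⁻¹ = L ^ (-(d:ℝ)) := by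
      rw [hlam_def, ← Real.rpow_natCast L d]
      exact (Real.rpow_neg hL0.le _).symm
    have h3 : L ^ (-(d:ℝ)) ≤ L ^ β := by
      apply Real.rpow_le_rpow_of_exponent_le hL
      rw [hβ_def]
      have h4 : 0 < p / (2 * (m:ℝ)) := by positivity
      have h5 : (0:ℝ) ≤ (d:ℝ) := Nat.cast_nonneg d
      linarith
    calc Real.exp (-lam) ≤ lam⁻¹ := h1
      _ = L ^ (-(d:ℝ)) := h2
      _ ≤ L ^ β := h3
  -- put everything together
  have hgoal : ∑' n : ℕ, ((poissonPMF (Real.toNNReal lam)) n).toReal *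
        |(if n = 0 then (0:ℝ) else lam / ↑n * g n) - g n| = ∑' n, F n :=
    tsum_congr (fun n => by rw [hP n])
  rw [hgoal]
  have hthird : C₁ * L ^ p / δ ^ (2 * m - 1) / lam ^ (2 * m)
      * (2 * Real.exp 2 * (2 * m)! * lam ^ m)
      = 2 * Real.exp 2 * (2 * m)! * C₁ * L ^ β := by
    have e : C₁ * L ^ p / δ ^ (2 * m - 1) / lam ^ (2 * m)
        * (2 * Real.exp 2 * (2 * m)! * lam ^ m)
        = 2 * Real.exp 2 * (2 * m)! * C₁
          * (L ^ p / δ ^ (2 * m - 1) / lam ^ (2 * m) * lam ^ m) := by ring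
    rw [e, hrw]
  have hβα' : L ^ β ≤ L ^ α := Real.rpow_le_rpow_of_exponent_le hL hβα
  have hfinal : ∑' n, F n ≤ (3 * C₀ + 2 * Real.exp 2 * (2 * m)! * C₁) * L ^ β := by
    calc ∑' n, F n ≤ ∑' n, (T1 n + T2 n + T3 n) := Summable.tsum_le_tsum hFA SF SA
      _ = (∑' n, T1 n) + (∑' n, T2 n) + (∑' n, T3 n) := by
          rw [Summable.tsum_add (ST1.add ST2) ST3, Summable.tsum_add ST1 ST2]
      _ ≤ C₀ * Real.exp (-lam) + 2 * C₀ * δ + C₁ * L ^ p / δ ^ (2 * m - 1) / lam ^ (2 * m)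
          * (2 * Real.exp 2 * (2 * m)! * lam ^ m) := by
          rw [hT1sum]
          exact add_le_add (add_le_add_right hT2sum _) hT3sum
      _ = C₀ * Real.exp (-lam) + 2 * C₀ * δ + 2 * Real.exp 2 * (2 * m)! * C₁ * L ^ β := by
          rw [hthird]
      _ ≤ C₀ * (L ^ β) + 2 * C₀ * (L ^ β) + 2 * Real.exp 2 * (2 * m)! * C₁ * L ^ β := by
          apply add_le_add_left
          apply add_le_add
          · exact mul_le_mul_of_nonneg_left hexp_le hC₀
          · rw [hδ_def]
      _ = (3 * C₀ + 2 * Real.exp 2 * (2 * m)! * C₁) * L ^ β := by ring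
  calc ∑' n, F n ≤ (3 * C₀ + 2 * Real.exp 2 * (2 * m)! * C₁) * L ^ β := hfinal
    _ ≤ (3 * C₀ + 2 * Real.exp 2 * (2 * m)! * C₁) * L ^ α :=
        mul_le_mul_of_nonneg_left hβα' (by positivity)
    _ ≤ (3 * C₀ + 2 * Real.exp 2 * (2 * m)! * C₁ + 1) * L ^ α := by
        apply mul_le_mul_of_nonneg_right _ (Real.rpow_pos_of_pos hL0 α).le
        linarith
end
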